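/- arXiv:2601.07561 — 4 statements merged into one kernel-verified Lean document; each statement's English description precedes it below -/
import Mathlib

section
/- Let ρ be a weight on L(G), M ≥ 1 and w ∈ ℝ, and assume that for all i ∈ I, all t ≥ 0, and almost every s ∈ [0,1] one has ρ_i(s) ≤ M e^{wt} · inf_{j∈M_{n(t,s)}(i)} ρ_j(s+t−n(t,s)). Then for every t ≥ 0 and every f ∈ L^1_ρ(L(G)), the translated family T_t f belongs to L^1_ρ(L(G)) and ‖T_t f‖_{1,ρ} ≤ M e^{wt} ‖f‖_{1,ρ}. -/
open MeasureTheory ENNReal Filter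
open scoped NNReal
set_option maxHeartbeats 1600000

noncomputable section

variable {I : Type*}

/-- The `n`-fold iterate of the parent map `P : I → Option I` of a directed metric tree,
encoded on the set of edges `I`. -/
def pIter (P : I → Option I) : ℕ → I → Option I
  | 0, j => some j
  | n + 1, j => (P j).bind (pIter P n)

/-- `Mset P n i` is the set of edges reachable from the edge `i` in `n` steps,
i.e. `M_n(i) = {j | P^[n] j = some i}`; `Mset P 0 i = {i}`. -/
def Mset (P : I → Option I) (n : ℕ) (i : I) : Set I := {j | pIter P n j = some i}

/-- `nfl t s = ⌊s + t⌋ ∈ ℕ`. -/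
def nfl (t s : ℝ) : ℕ := ⌊s + t⌋₊

/-- The left translation `T_t` on families of functions on the edges:
`(T_t f)_i (s) = ∑_{j ∈ M_{n(t,s)}(i)} f_j (t + s - n(t,s))`. -/
def Tleft (P : I → Option I) (f : I → ℝ → ℝ) (t : ℝ) (i : I) (s : ℝ) : ℝ :=
  ∑' j : Mset P (nfl t s) i, f (j : I) (t + s - (nfl t s : ℝ))

/-- The `p`-th power of the norm of a family `f` in `L^p_ρ(L(G))`:
`‖f‖_{p,ρ}^p = ∑_{i ∈ I} ∫_0^1 |f_i(s)|^p ρ_i(s) ds`, with values in `[0,∞]`. -/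
def pnorm (ρ : I → ℝ → ℝ) (p : ℝ) (f : I → ℝ → ℝ) : ℝ≥0∞ :=
  ∑' i, ∫⁻ s in Set.Icc (0 : ℝ) 1, ENNReal.ofReal (|f i s| ^ p * ρ i s)

/-- Membership in `L^p_ρ(L(G))`: each component is (a.e.) measurable on `[0,1]` and the
`ℓ^p`-direct sum norm is finite. -/
def memLprho (ρ : I → ℝ → ℝ) (p : ℝ) (f : I → ℝ → ℝ) : Prop :=
  (∀ i, AEMeasurable (f i) (volume.restrict (Set.Icc (0 : ℝ) 1))) ∧ pnorm ρ p f < ⊤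

/-- The norm `‖f‖_{p,ρ}` in `L^p_ρ(L(G))`, with values in `[0,∞]`. -/
def enorm' (ρ : I → ℝ → ℝ) (p : ℝ) (f : I → ℝ → ℝ) : ℝ≥0∞ := pnorm ρ p f ^ (1 / p)

/-- The distance `‖f - g‖_{p,ρ}` in `L^p_ρ(L(G))`, with values in `[0,∞]`. -/
def pdist (ρ : I → ℝ → ℝ) (p : ℝ) (f g : I → ℝ → ℝ) : ℝ≥0∞ :=
  enorm' ρ p fun i s => f i s - g i s

/-- A weight on `L(G)`: a family of integrable functions on `[0,1]`, strictly positive a.e. -/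
structure IsWeight (ρ : I → ℝ → ℝ) : Prop where
  integrable : ∀ i, IntegrableOn (ρ i) (Set.Icc (0 : ℝ) 1)
  pos : ∀ i, ∀ᵐ s ∂(volume.restrict (Set.Icc (0 : ℝ) 1)), 0 < ρ i s

/-- The `1`-admissibility condition (everywhere on `[0,1]`) with constants `M, w`:
`ρ_i(s) ≤ M e^{wt} inf_{j ∈ M_{n(t,s)}(i)} ρ_j(s+t-n(t,s))`, the infimum (in `[0,∞]`)
over the empty set being `+∞`. -/
def Admissible1 (P : I → Option I) (ρ : I → ℝ → ℝ) (M w : ℝ) : Prop :=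
  ∀ i, ∀ t ≥ (0 : ℝ), ∀ s ∈ Set.Icc (0 : ℝ) 1,
    ENNReal.ofReal (ρ i s) ≤ ENNReal.ofReal (M * Real.exp (w * t)) *
      ⨅ j : Mset P (nfl t s) i, ENNReal.ofReal (ρ (j : I) (s + t - (nfl t s : ℝ)))

/-- The `p`-admissibility condition (`1 < p < ∞`, everywhere on `[0,1]`) with constants `M, w`:
`(∑_{j ∈ M_{n(t,s)}(i)} ρ_j(s+t-n(t,s))^{-1/(p-1)})^{p-1} ≤ M^p e^{pwt} / ρ_i(s)`,
the sum being taken in `[0,∞]`. -/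
def AdmissibleP (P : I → Option I) (ρ : I → ℝ → ℝ) (p M w : ℝ) : Prop :=
  ∀ i, ∀ t ≥ (0 : ℝ), ∀ s ∈ Set.Icc (0 : ℝ) 1,
    (∑' j : Mset P (nfl t s) i,
        ENNReal.ofReal ((ρ (j : I) (s + t - (nfl t s : ℝ))) ^ (-(1 / (p - 1))))) ^ (p - 1)
      ≤ ENNReal.ofReal (M ^ p * Real.exp (p * w * t) / ρ i s)

/-- `p`-admissibility, `1 ≤ p < ∞`. -/
def Admissible (P : I → Option I) (ρ : I → ℝ → ℝ) (p M w : ℝ) : Prop :=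
  (p = 1 → Admissible1 P ρ M w) ∧ (1 < p → AdmissibleP P ρ p M w)


lemma myOfReal_max (x : ℝ) : ENNReal.ofReal x = ENNReal.ofReal (max x 0) := by
  rcases le_total 0 x with h | h
  · rw [max_eq_left h]
  · rw [max_eq_right h, ENNReal.ofReal_of_nonpos h, ENNReal.ofReal_zero]

lemma mySummable_iff {ι : Type*} (g : ι → ℝ) :
    Summable g ↔ (∑' j, ENNReal.ofReal |g j|) ≠ ⊤ := by
  have h : ∀ j, ENNReal.ofReal |g j| = ((‖g j‖₊ : ℝ≥0) : ℝ≥0∞) := fun j => by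
    rw [← Real.norm_eq_abs]; exact ENNReal.ofReal_eq_coe_nnreal (norm_nonneg _)
  simp_rw [h]
  rw [ENNReal.tsum_coe_ne_top_iff_summable]
  constructor
  · intro hs
    exact NNReal.summable_coe.mp (by simpa [Real.norm_eq_abs] using hs.abs)
  · intro hs
    have := NNReal.summable_coe.mpr hs
    simp only [coe_nnnorm, Real.norm_eq_abs] at this
    exact Summable.of_abs this

lemma myOfReal_abs_tsum_le {ι : Type*} (g : ι → ℝ) :
    ENNReal.ofReal |∑' j, g j| ≤ ∑' j, ENNReal.ofReal |g j| := by
  by_cases hg : Summable g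
  · calc ENNReal.ofReal |∑' j, g j| ≤ ENNReal.ofReal (∑' j, |g j|) := by
          refine ENNReal.ofReal_le_ofReal ?_
          have h1 := norm_tsum_le_tsum_norm (f := g)
            (by simpa only [Real.norm_eq_abs] using hg.abs)
          simpa only [Real.norm_eq_abs] using h1
      _ = ∑' j, ENNReal.ofReal |g j| :=
          ENNReal.ofReal_tsum_of_nonneg (fun j => abs_nonneg _) hg.abs
  · rw [tsum_eq_zero_of_not_summable hg]
    simp

lemma myMeasurable_tsum_real {ι : Type*} [Countable ι] {g : ι → ℝ → ℝ}
    (hg : ∀ j, Measurable (g j)) : Measurable (fun s => ∑' j, g j s) := by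
  classical
  have hA : Measurable (fun s => ∑' j, ENNReal.ofReal |g j s|) :=
    Measurable.ennreal_tsum fun j => ((hg j).abs).ennreal_ofReal
  have hP : Measurable (fun s => ∑' j, ENNReal.ofReal (g j s)) :=
    Measurable.ennreal_tsum fun j => (hg j).ennreal_ofReal
  have hN : Measurable (fun s => ∑' j, ENNReal.ofReal (-(g j s))) :=
    Measurable.ennreal_tsum fun j => ((hg j).neg).ennreal_ofReal
  have hset : MeasurableSet {s | (∑' j, ENNReal.ofReal |g j s|) ≠ ⊤} := by
    have : {s | (∑' j, ENNReal.ofReal |g j s|) ≠ ⊤}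
        = ((fun s => ∑' j, ENNReal.ofReal |g j s|) ⁻¹' {⊤})ᶜ := by
      ext s; simp
    rw [this]
    exact (hA (measurableSet_singleton ⊤)).compl
  have key : (fun s => ∑' j, g j s) = fun s =>
      if (∑' j, ENNReal.ofReal |g j s|) ≠ ⊤
      then (∑' j, ENNReal.ofReal (g j s)).toReal - (∑' j, ENNReal.ofReal (-(g j s))).toReal
      else 0 := by
    funext s
    by_cases hs : Summable (fun j => g j s)
    · rw [if_pos ((mySummable_iff _).1 hs)]
      set v : ι → ℝ := fun j => max (g j s) 0 with hv
      set w : ι → ℝ := fun j => max (-(g j s)) 0 with hw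
      have hvs : Summable v :=
        Summable.of_nonneg_of_le (fun j => le_max_right _ _)
          (fun j => max_le (le_abs_self _) (abs_nonneg _)) hs.abs
      have hws : Summable w :=
        Summable.of_nonneg_of_le (fun j => le_max_right _ _)
          (fun j => max_le (abs_neg (g j s) ▸ le_abs_self _) (abs_nonneg _)) hs.abs
      have h1 : (∑' j, ENNReal.ofReal (g j s)).toReal = ∑' j, v j := by
        have : ∀ j, ENNReal.ofReal (g j s) = ENNReal.ofReal (v j) := fun j => myOfReal_max _
        simp_rw [this]
        rw [← ENNReal.ofReal_tsum_of_nonneg (fun j => le_max_right _ _) hvs,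
          ENNReal.toReal_ofReal (tsum_nonneg fun j => le_max_right _ _)]
      have h2 : (∑' j, ENNReal.ofReal (-(g j s))).toReal = ∑' j, w j := by
        have : ∀ j, ENNReal.ofReal (-(g j s)) = ENNReal.ofReal (w j) := fun j => myOfReal_max _
        simp_rw [this]
        rw [← ENNReal.ofReal_tsum_of_nonneg (fun j => le_max_right _ _) hws,
          ENNReal.toReal_ofReal (tsum_nonneg fun j => le_max_right _ _)]
      rw [h1, h2, ← Summable.tsum_sub hvs hws]
      congr 1
      funext j
      simp only [hv, hw]
      exact (max_zero_sub_max_neg_zero_eq_self (g j s)).symm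
    · rw [tsum_eq_zero_of_not_summable hs, if_neg (by simpa using (mySummable_iff _).not.1 hs)]
  rw [key]
  exact Measurable.ite hset (hP.ennreal_toReal.sub hN.ennreal_toReal) measurable_const

lemma myLint_shift (h : ℝ → ℝ≥0∞) (hh : Measurable h) (a : ℝ) (B : Set ℝ)
    (hB : MeasurableSet B) :
    ∫⁻ s in (fun x => x + a) ⁻¹' B, h (s + a) = ∫⁻ y in B, h y := by
  conv_rhs => rw [← map_add_right_eq_self volume a]
  rw [setLIntegral_map hB hh (measurable_add_const a)]

lemma myNull_preimage_add (a : ℝ) {N : Set ℝ} (hN : volume N = 0) :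
    volume ((fun x => x + a) ⁻¹' N) = 0 := by
  obtain ⟨N', hsub, hmeas, hN'⟩ := exists_measurable_superset_of_null hN
  refine measure_mono_null (Set.preimage_mono hsub) ?_
  have : volume ((fun x => x + a) ⁻¹' N') = (Measure.map (fun x => x + a) volume) N' :=
    (Measure.map_apply (measurable_add_const a) hmeas).symm
  rw [this, map_add_right_eq_self volume a, hN']

lemma myTsum_Mset_le {I : Type*} [Countable I] (P : I → Option I) (n : ℕ) (v : I → ℝ≥0∞) :
    ∑' i : I, ∑' j : Mset P n i, v (j : I) ≤ ∑' j : I, v j := by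
  classical
  have h : ∀ i : I, (∑' j : Mset P n i, v (j : I))
      = ∑' j : I, Set.indicator (Mset P n i) v j := fun i => tsum_subtype _ _
  simp_rw [h]
  rw [ENNReal.tsum_comm]
  refine ENNReal.tsum_le_tsum fun j => ?_
  rcases hcase : pIter P n j with _ | i₀
  · have hz : ∀ i : I, Set.indicator (Mset P n i) v j = 0 := fun i =>
      Set.indicator_of_notMem (by simp [Mset, hcase]) _
    simp [hz]
  · rw [tsum_eq_single i₀ ?_]
    · exact Set.indicator_le_self _ _ j
    · intro i hi
      refine Set.indicator_of_notMem (fun hmem => hi ?_) _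
      have : some i = some i₀ := by rw [← hmem, hcase]
      exact Option.some_injective _ this

/-- **Proposition 2.2 (a), sufficiency**.  Let `ρ` be a weight on `L(G)`, `M ≥ 1`, `w ∈ ℝ`,
and assume that for all `i ∈ I`, all `t ≥ 0` and almost every `s ∈ [0,1]`,
`ρ_i(s) ≤ M e^{wt} inf_{j ∈ M_{n(t,s)}(i)} ρ_j(s + t - n(t,s))`.  Then for every `t ≥ 0`
and every `f ∈ L^1_ρ(L(G))`, the translated family `T_t f` belongs to `L^1_ρ(L(G))` and
`‖T_t f‖_{1,ρ} ≤ M e^{wt} ‖f‖_{1,ρ}`. -/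
theorem translation_bounded_L1 {I : Type*} [Countable I] [Nonempty I]
    (P : I → Option I) (ρ : I → ℝ → ℝ) (hρ : IsWeight ρ) (M w : ℝ) (hM : 1 ≤ M)
    (hadm : ∀ i, ∀ t ≥ (0 : ℝ), ∀ᵐ s ∂(volume.restrict (Set.Icc (0 : ℝ) 1)),
      ENNReal.ofReal (ρ i s) ≤ ENNReal.ofReal (M * Real.exp (w * t)) *
        ⨅ j : Mset P (nfl t s) i, ENNReal.ofReal (ρ (j : I) (s + t - (nfl t s : ℝ)))) :
    ∀ t ≥ (0 : ℝ), ∀ f, memLprho ρ 1 f →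
      memLprho ρ 1 (Tleft P f t) ∧
      enorm' ρ 1 (Tleft P f t) ≤ ENNReal.ofReal (M * Real.exp (w * t)) * enorm' ρ 1 f := by
  classical
  intro t ht f hf
  set C : ℝ≥0∞ := ENNReal.ofReal (M * Real.exp (w * t)) with hC
  have hCtop : C ≠ ⊤ := ENNReal.ofReal_ne_top
  set m : ℕ := ⌊t⌋₊ with hm
  set τ : ℝ := t - m with hτdef
  have hmt : (m : ℝ) ≤ t := Nat.floor_le ht
  have hτ0 : 0 ≤ τ := by rw [hτdef]; linarith
  have hτ1 : τ < 1 := by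
    have h := Nat.lt_floor_add_one t
    rw [hτdef]; push_cast at h ⊢; linarith
  set c : ℝ := 1 - τ with hcdef
  have hc0 : 0 < c := by rw [hcdef]; linarith
  have hc1 : c ≤ 1 := by rw [hcdef]; linarith
  have hnfl1 : ∀ s : ℝ, 0 ≤ s → s < c → nfl t s = m := by
    intro s hs0 hsc
    have h1 : s + t = (s + τ) + (m : ℝ) := by rw [hτdef]; ring
    rw [nfl, h1, Nat.floor_add_natCast (by linarith)]
    have h2 : ⌊s + τ⌋₊ = 0 := Nat.floor_eq_zero.mpr (by rw [hcdef] at hsc; linarith)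
    rw [h2, zero_add]
  have hnfl2 : ∀ s : ℝ, c ≤ s → s ≤ 1 → nfl t s = m + 1 := by
    intro s hsc hs1
    have h1 : s + t = (s + τ) + (m : ℝ) := by rw [hτdef]; ring
    rw [nfl, h1, Nat.floor_add_natCast (by linarith)]
    have h2 : ⌊s + τ⌋₊ = 1 := by
      rw [Nat.floor_eq_iff (by linarith)]
      rw [hcdef] at hsc
      constructor <;> push_cast <;> linarith
    rw [h2, add_comm]
  -- measurable versions of f and ρ
  have hfm : ∀ j, AEMeasurable (f j) (volume.restrict (Set.Icc (0 : ℝ) 1)) := hf.1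
  set F : I → ℝ → ℝ := fun j => (hfm j).mk (f j) with hF
  have hFmeas : ∀ j, Measurable (F j) := fun j => (hfm j).measurable_mk
  have hFeq : ∀ j, f j =ᵐ[volume.restrict (Set.Icc (0 : ℝ) 1)] F j := fun j => (hfm j).ae_eq_mk
  have hρm : ∀ j, AEMeasurable (ρ j) (volume.restrict (Set.Icc (0 : ℝ) 1)) :=
    fun j => (hρ.integrable j).aemeasurable
  set R : I → ℝ → ℝ := fun j => (hρm j).mk (ρ j) with hR
  have hRmeas : ∀ j, Measurable (R j) := fun j => (hρm j).measurable_mk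
  have hReq : ∀ j, ρ j =ᵐ[volume.restrict (Set.Icc (0 : ℝ) 1)] R j := fun j => (hρm j).ae_eq_mk
  set G : I → ℝ → ℝ≥0∞ := fun j σ => ENNReal.ofReal (|F j σ| * R j σ) with hG
  have hGmeas : ∀ j, Measurable (G j) := fun j => ((hFmeas j).abs.mul (hRmeas j)).ennreal_ofReal
  -- the bad null set
  set N : Set ℝ := ⋃ j, (({s | f j s ≠ F j s} ∪ {s | ρ j s ≠ R j s}) ∩ Set.Icc (0 : ℝ) 1)
    with hNdef
  have hNnull : volume N = 0 := by
    refine measure_iUnion_null fun j => ?_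
    have h1 : volume ({s | f j s ≠ F j s} ∩ Set.Icc (0 : ℝ) 1) = 0 := by
      have h := hFeq j
      rw [Filter.EventuallyEq, ae_iff, Measure.restrict_apply' measurableSet_Icc] at h
      exact h
    have h2 : volume ({s | ρ j s ≠ R j s} ∩ Set.Icc (0 : ℝ) 1) = 0 := by
      have h := hReq j
      rw [Filter.EventuallyEq, ae_iff, Measure.restrict_apply' measurableSet_Icc] at h
      exact h
    rw [Set.union_inter_distrib_right]
    exact measure_union_null h1 h2
  set Bad : Set ℝ := (N ∪ (fun x => x + τ) ⁻¹' N) ∪ (fun x => x + (τ - 1)) ⁻¹' N with hBaddef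
  have hBadnull : volume Bad = 0 :=
    measure_union_null (measure_union_null hNnull (myNull_preimage_add τ hNnull))
      (myNull_preimage_add (τ - 1) hNnull)
  have hGoodae : ∀ᵐ s ∂(volume.restrict (Set.Icc (0 : ℝ) 1)), s ∉ Bad := by
    rw [ae_iff]
    have h : (volume.restrict (Set.Icc (0 : ℝ) 1)) Bad = 0 := by
      rw [Measure.restrict_apply' measurableSet_Icc]
      exact measure_mono_null Set.inter_subset_left hBadnull
    simpa only [not_not, Set.setOf_mem_eq] using h
  have hgood_eq : ∀ s ∈ Set.Icc (0 : ℝ) 1, s ∉ N → ∀ j, f j s = F j s ∧ ρ j s = R j s := by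
    intro s hs hsN j
    constructor
    · by_contra hne
      exact hsN (Set.mem_iUnion.2 ⟨j, ⟨Or.inl hne, hs⟩⟩)
    · by_contra hne
      exact hsN (Set.mem_iUnion.2 ⟨j, ⟨Or.inr hne, hs⟩⟩)
  -- Step A : pointwise domination
  have hA : ∀ i, (∫⁻ s in Set.Icc (0 : ℝ) 1,
        ENNReal.ofReal (|Tleft P f t i s| ^ (1 : ℝ) * ρ i s))
      ≤ C * ∫⁻ s in Set.Icc (0 : ℝ) 1,
          ∑' j : Mset P (nfl t s) i, G (j : I) (t + s - (nfl t s : ℝ)) := by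
    intro i
    rw [← lintegral_const_mul' C _ hCtop]
    refine lintegral_mono_ae ?_
    filter_upwards [hGoodae, ae_restrict_mem measurableSet_Icc, hadm i t ht]
      with s hsB hs hadm_s
    have hsN1 : s + τ ∉ N := fun h => hsB (Or.inl (Or.inr h))
    have hsN2 : s + (τ - 1) ∉ N := fun h => hsB (Or.inr h)
    have hσfacts : (t + s - (nfl t s : ℝ)) ∈ Set.Icc (0 : ℝ) 1
        ∧ (t + s - (nfl t s : ℝ)) ∉ N := by
      rcases lt_or_ge s c with hsc | hsc
      · rw [hnfl1 s hs.1 hsc]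
        have hσ : t + s - (m : ℝ) = s + τ := by rw [hτdef]; ring
        rw [hσ]
        refine ⟨⟨by linarith [hs.1], ?_⟩, hsN1⟩
        rw [hcdef] at hsc; linarith
      · rw [hnfl2 s hsc hs.2]
        have hσ : t + s - ((m + 1 : ℕ) : ℝ) = s + (τ - 1) := by push_cast; rw [hτdef]; ring
        rw [hσ]
        refine ⟨⟨?_, by linarith [hs.2]⟩, hsN2⟩
        rw [hcdef] at hsc; linarith
    set n := nfl t s with hn
    set σ := t + s - (n : ℝ) with hσdef
    obtain ⟨hσmem, hσN⟩ := hσfacts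
    have hfF : ∀ j : I, f j σ = F j σ := fun j => (hgood_eq σ hσmem hσN j).1
    have hρR : ∀ j : I, ρ j σ = R j σ := fun j => (hgood_eq σ hσmem hσN j).2
    have hT : Tleft P f t i s = ∑' j : Mset P n i, F (j : I) σ := by
      rw [Tleft]
      exact tsum_congr fun j => by rw [hfF]
    have hst : s + t - (n : ℝ) = σ := by rw [hσdef]; ring
    rw [hst] at hadm_s
    rw [hT, Real.rpow_one, ENNReal.ofReal_mul (abs_nonneg _)]
    calc ENNReal.ofReal |∑' j : Mset P n i, F (j : I) σ| * ENNReal.ofReal (ρ i s)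
        ≤ (∑' j : Mset P n i, ENNReal.ofReal |F (j : I) σ|)
            * (C * ⨅ j : Mset P n i, ENNReal.ofReal (ρ (j : I) σ)) :=
          mul_le_mul' (myOfReal_abs_tsum_le _) hadm_s
      _ = C * ((∑' j : Mset P n i, ENNReal.ofReal |F (j : I) σ|)
            * ⨅ j : Mset P n i, ENNReal.ofReal (ρ (j : I) σ)) := by rw [mul_left_comm]
      _ = C * (∑' j : Mset P n i, ENNReal.ofReal |F (j : I) σ|
            * ⨅ j' : Mset P n i, ENNReal.ofReal (ρ (j' : I) σ)) := by
          rw [ENNReal.tsum_mul_right]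
      _ ≤ C * (∑' j : Mset P n i, ENNReal.ofReal |F (j : I) σ|
            * ENNReal.ofReal (ρ (j : I) σ)) :=
          mul_le_mul_right (ENNReal.tsum_le_tsum fun j => mul_le_mul_right (iInf_le _ j) _) _
      _ = C * ∑' j : Mset P n i, G (j : I) σ := by
          refine congrArg (C * ·) (tsum_congr fun j => ?_)
          rw [hG, ← ENNReal.ofReal_mul (abs_nonneg _), hρR]
  -- Step B : change of variables and re-summation
  have hB : (∑' i : I, ∫⁻ s in Set.Icc (0 : ℝ) 1,
        ∑' j : Mset P (nfl t s) i, G (j : I) (t + s - (nfl t s : ℝ)))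
      ≤ pnorm ρ 1 f := by
    have hsplit : ∀ i : I, (∫⁻ s in Set.Icc (0 : ℝ) 1,
        ∑' j : Mset P (nfl t s) i, G (j : I) (t + s - (nfl t s : ℝ)))
        = (∫⁻ σ in Set.Ico τ 1, ∑' j : Mset P m i, G (j : I) σ)
          + ∫⁻ σ in Set.Icc 0 τ, ∑' j : Mset P (m + 1) i, G (j : I) σ := by
      intro i
      have hU : Set.Icc (0 : ℝ) 1 = Set.Ico 0 c ∪ Set.Icc c 1 := by
        ext x
        simp only [Set.mem_Icc, Set.mem_Ico, Set.mem_union]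
        constructor
        · rintro ⟨h0, h1⟩
          rcases lt_or_ge x c with h | h
          · exact Or.inl ⟨h0, h⟩
          · exact Or.inr ⟨h, h1⟩
        · rintro (⟨h0, h1⟩ | ⟨h0, h1⟩) <;> constructor <;> linarith
      have hdisj : Disjoint (Set.Ico (0 : ℝ) c) (Set.Icc c 1) := by
        rw [Set.disjoint_left]
        rintro x ⟨_, hx⟩ ⟨hx', _⟩
        exact absurd hx' (not_le.2 hx)
      rw [hU, lintegral_union measurableSet_Icc hdisj]
      congr 1
      · have h1 : ∀ s ∈ Set.Ico (0 : ℝ) c,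
            (∑' j : Mset P (nfl t s) i, G (j : I) (t + s - (nfl t s : ℝ)))
              = (fun σ => ∑' j : Mset P m i, G (j : I) σ) (s + τ) := by
          intro s hs
          rw [hnfl1 s hs.1 hs.2]
          have hσ : t + s - (m : ℝ) = s + τ := by rw [hτdef]; ring
          rw [hσ]
        rw [setLIntegral_congr_fun_ae measurableSet_Ico (ae_of_all _ h1)]
        have hpre : Set.Ico (0 : ℝ) c = (fun x => x + τ) ⁻¹' Set.Ico τ 1 := by
          ext x
          simp only [Set.mem_Ico, Set.mem_preimage]
          rw [hcdef]
          constructor <;> intro hx <;> exact ⟨by linarith [hx.1], by linarith [hx.2]⟩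
        rw [hpre]
        exact myLint_shift (fun σ => ∑' j : Mset P m i, G (j : I) σ)
          (Measurable.ennreal_tsum fun j => hGmeas (j : I)) τ _ measurableSet_Ico
      · have h2 : ∀ s ∈ Set.Icc c 1,
            (∑' j : Mset P (nfl t s) i, G (j : I) (t + s - (nfl t s : ℝ)))
              = (fun σ => ∑' j : Mset P (m + 1) i, G (j : I) σ) (s + (τ - 1)) := by
          intro s hs
          rw [hnfl2 s hs.1 hs.2]
          have hσ : t + s - ((m + 1 : ℕ) : ℝ) = s + (τ - 1) := by push_cast; rw [hτdef]; ring
          rw [hσ]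
        rw [setLIntegral_congr_fun_ae measurableSet_Icc (ae_of_all _ h2)]
        have hpre : Set.Icc c 1 = (fun x => x + (τ - 1)) ⁻¹' Set.Icc 0 τ := by
          ext x
          simp only [Set.mem_Icc, Set.mem_preimage]
          rw [hcdef]
          constructor <;> intro hx <;> exact ⟨by linarith [hx.1], by linarith [hx.2]⟩
        rw [hpre]
        exact myLint_shift (fun σ => ∑' j : Mset P (m + 1) i, G (j : I) σ)
          (Measurable.ennreal_tsum fun j => hGmeas (j : I)) (τ - 1) _ measurableSet_Icc
    calc (∑' i : I, ∫⁻ s in Set.Icc (0 : ℝ) 1,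
          ∑' j : Mset P (nfl t s) i, G (j : I) (t + s - (nfl t s : ℝ)))
        = ∑' i : I, ((∫⁻ σ in Set.Ico τ 1, ∑' j : Mset P m i, G (j : I) σ)
            + ∫⁻ σ in Set.Icc 0 τ, ∑' j : Mset P (m + 1) i, G (j : I) σ) := tsum_congr hsplit
      _ = (∑' i : I, ∫⁻ σ in Set.Ico τ 1, ∑' j : Mset P m i, G (j : I) σ)
            + ∑' i : I, ∫⁻ σ in Set.Icc 0 τ, ∑' j : Mset P (m + 1) i, G (j : I) σ :=
          ENNReal.tsum_add
      _ = (∫⁻ σ in Set.Ico τ 1, ∑' i : I, ∑' j : Mset P m i, G (j : I) σ)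
            + ∫⁻ σ in Set.Icc 0 τ, ∑' i : I, ∑' j : Mset P (m + 1) i, G (j : I) σ := by
          rw [← lintegral_tsum fun i : I => (Measurable.ennreal_tsum
              fun j : Mset P m i => hGmeas (j : I)).aemeasurable,
            ← lintegral_tsum fun i : I => (Measurable.ennreal_tsum
              fun j : Mset P (m + 1) i => hGmeas (j : I)).aemeasurable]
      _ ≤ (∫⁻ σ in Set.Ico τ 1, ∑' j : I, G j σ)
            + ∫⁻ σ in Set.Icc 0 τ, ∑' j : I, G j σ :=
          add_le_add (lintegral_mono fun σ => myTsum_Mset_le P m (fun j => G j σ))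
            (lintegral_mono fun σ => myTsum_Mset_le P (m + 1) (fun j => G j σ))
      _ = (∫⁻ σ in Set.Ico τ 1, ∑' j : I, G j σ)
            + ∫⁻ σ in Set.Ico 0 τ, ∑' j : I, G j σ := by
          rw [← restrict_Ico_eq_restrict_Icc (a := (0:ℝ)) (b := τ)]
      _ = ∫⁻ σ in Set.Ico (0 : ℝ) 1, ∑' j : I, G j σ := by
          rw [add_comm, ← lintegral_union measurableSet_Ico
            (Set.Ico_disjoint_Ico_same),
            Set.Ico_union_Ico_eq_Ico hτ0 (le_of_lt hτ1)]
      _ ≤ ∫⁻ σ in Set.Icc (0 : ℝ) 1, ∑' j : I, G j σ :=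
          lintegral_mono_set Set.Ico_subset_Icc_self
      _ = ∑' j : I, ∫⁻ σ in Set.Icc (0 : ℝ) 1, G j σ :=
          lintegral_tsum fun j => (hGmeas j).aemeasurable
      _ = pnorm ρ 1 f := by
          simp only [pnorm]
          refine tsum_congr fun j => lintegral_congr_ae ?_
          filter_upwards [hFeq j, hReq j] with σ h1 h2
          rw [hG, Real.rpow_one, h1, h2]
  -- measurability of the translated family
  have hTmeas : ∀ i, AEMeasurable (Tleft P f t i) (volume.restrict (Set.Icc (0 : ℝ) 1)) := by
    intro i
    have hWmeas : Measurable ((Set.Iio c).piecewise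
        (fun s => ∑' j : Mset P m i, F (j : I) (s + τ))
        (fun s => ∑' j : Mset P (m + 1) i, F (j : I) (s + (τ - 1)))) :=
      Measurable.piecewise measurableSet_Iio
        (myMeasurable_tsum_real fun j => (hFmeas (j : I)).comp (measurable_add_const τ))
        (myMeasurable_tsum_real fun j => (hFmeas (j : I)).comp (measurable_add_const (τ - 1)))
    refine hWmeas.aemeasurable.congr ?_
    filter_upwards [hGoodae, ae_restrict_mem measurableSet_Icc] with s hsB hs
    have hsN1 : s + τ ∉ N := fun h => hsB (Or.inl (Or.inr h))
    have hsN2 : s + (τ - 1) ∉ N := fun h => hsB (Or.inr h)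
    rcases lt_or_ge s c with hsc | hsc
    · have hT : Tleft P f t i s = ∑' j : Mset P m i, F (j : I) (s + τ) := by
        rw [Tleft, hnfl1 s hs.1 hsc]
        have hσ : t + s - (m : ℝ) = s + τ := by rw [hτdef]; ring
        rw [hσ]
        refine tsum_congr fun j => ?_
        have hmem : s + τ ∈ Set.Icc (0 : ℝ) 1 := by
          rw [hcdef] at hsc
          exact ⟨by linarith [hs.1], by linarith⟩
        exact (hgood_eq _ hmem hsN1 (j : I)).1
      rw [Set.piecewise_eq_of_mem _ _ _ (Set.mem_Iio.2 hsc)]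
      exact hT.symm
    · have hT : Tleft P f t i s = ∑' j : Mset P (m + 1) i, F (j : I) (s + (τ - 1)) := by
        rw [Tleft, hnfl2 s hsc hs.2]
        have hσ : t + s - ((m + 1 : ℕ) : ℝ) = s + (τ - 1) := by push_cast; rw [hτdef]; ring
        rw [hσ]
        refine tsum_congr fun j => ?_
        have hmem : s + (τ - 1) ∈ Set.Icc (0 : ℝ) 1 := by
          rw [hcdef] at hsc
          exact ⟨by linarith, by linarith [hs.2]⟩
        exact (hgood_eq _ hmem hsN2 (j : I)).1
      rw [Set.piecewise_eq_of_notMem _ _ _ (by simpa using not_lt.2 hsc)]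
      exact hT.symm
  -- main norm estimate
  have hkey : pnorm ρ 1 (Tleft P f t) ≤ C * pnorm ρ 1 f := by
    simp only [pnorm]
    calc (∑' i : I, ∫⁻ s in Set.Icc (0 : ℝ) 1,
          ENNReal.ofReal (|Tleft P f t i s| ^ (1 : ℝ) * ρ i s))
        ≤ ∑' i : I, C * ∫⁻ s in Set.Icc (0 : ℝ) 1,
            ∑' j : Mset P (nfl t s) i, G (j : I) (t + s - (nfl t s : ℝ)) :=
          ENNReal.tsum_le_tsum hA
      _ = C * ∑' i : I, ∫⁻ s in Set.Icc (0 : ℝ) 1,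
            ∑' j : Mset P (nfl t s) i, G (j : I) (t + s - (nfl t s : ℝ)) :=
          ENNReal.tsum_mul_left
      _ ≤ C * (∑' i : I, ∫⁻ s in Set.Icc (0 : ℝ) 1,
            ENNReal.ofReal (|f i s| ^ (1 : ℝ) * ρ i s)) := by
          refine mul_le_mul_right ?_ C
          simpa only [pnorm] using hB
  have hfin : pnorm ρ 1 (Tleft P f t) < ⊤ :=
    lt_of_le_of_lt hkey (ENNReal.mul_lt_top (lt_of_le_of_ne le_top hCtop) hf.2)
  refine ⟨⟨hTmeas, hfin⟩, ?_⟩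
  simp only [enorm']
  norm_num
  exact hkey


end
end

section
/- Let 1 < p < ∞, let ρ be a weight on L(G), M ≥ 1 and w ∈ ℝ, and assume that for all i ∈ I, all t ≥ 0, and almost every s ∈ [0,1] one has (Σ_{j∈M_{n(t,s)}(i)} ρ_j(s+t−n(t,s))^{−1/(p−1)})^{p−1} ≤ M^p e^{pwt} / ρ_i(s). Then for every t ≥ 0 and every f ∈ L^p_ρ(L(G)), the translated family T_t f belongs to L^p_ρ(L(G)) and ‖T_t f‖_{p,ρ} ≤ M e^{wt} ‖f‖_{p,ρ}. -/
open MeasureTheory ENNReal Filter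

noncomputable section

variable {I : Type*}

section AuxLemmas

variable {α : Type*} [MeasurableSpace α] {μ : Measure α}

private lemma aux_tsum_aemeasurable {J : Type*} [Countable J] {g : J → α → ℝ}
    (hg : ∀ j, AEMeasurable (g j) μ) :
    AEMeasurable (fun x => ∑' j, g j x) μ := by
  classical
  set S : α → ℝ≥0∞ := fun x => ∑' j, (‖g j x‖₊ : ℝ≥0∞) with hSdef
  set Pp : α → ℝ := fun x => (∑' j, ENNReal.ofReal (g j x)).toReal with hPdef
  set Nn : α → ℝ := fun x => (∑' j, ENNReal.ofReal (-(g j x))).toReal with hNdef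
  have key : (fun x => ∑' j, g j x) = fun x => if S x ≠ ⊤ then Pp x - Nn x else 0 := by
    funext x
    by_cases h : Summable fun j => g j x
    · have habs : Summable fun j => |g j x| := h.abs
      have hS : S x ≠ ⊤ := by
        refine ENNReal.tsum_coe_ne_top_iff_summable.2 ?_
        rw [← NNReal.summable_coe]
        simpa [coe_nnnorm, Real.norm_eq_abs] using habs
      rw [if_pos hS]
      have hu : Summable fun j => max (g j x) 0 :=
        habs.of_nonneg_of_le (fun j => le_max_right _ _)
          (fun j => max_le (le_abs_self _) (abs_nonneg _))
      have hv : Summable fun j => max (-(g j x)) 0 :=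
        habs.of_nonneg_of_le (fun j => le_max_right _ _)
          (fun j => max_le (neg_le_abs _) (abs_nonneg _))
      have hPp : Pp x = ∑' j, max (g j x) 0 := by
        have h1 : ∀ j, ENNReal.ofReal (g j x) = ENNReal.ofReal (max (g j x) 0) := fun j => by
          rcases le_total (g j x) 0 with h' | h'
          · simp [ENNReal.ofReal_eq_zero.2 h', max_eq_right h']
          · simp [max_eq_left h']
        simp only [hPdef, h1]
        rw [← ENNReal.ofReal_tsum_of_nonneg (fun j => le_max_right _ _) hu,
          ENNReal.toReal_ofReal (tsum_nonneg fun j => le_max_right _ _)]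
      have hNn : Nn x = ∑' j, max (-(g j x)) 0 := by
        have h1 : ∀ j, ENNReal.ofReal (-(g j x)) = ENNReal.ofReal (max (-(g j x)) 0) := fun j => by
          rcases le_total (-(g j x)) 0 with h' | h'
          · simp [ENNReal.ofReal_eq_zero.2 h', max_eq_right h']
          · simp [max_eq_left h']
        simp only [hNdef, h1]
        rw [← ENNReal.ofReal_tsum_of_nonneg (fun j => le_max_right _ _) hv,
          ENNReal.toReal_ofReal (tsum_nonneg fun j => le_max_right _ _)]
      calc ∑' j, g j x = ∑' j, (max (g j x) 0 - max (-(g j x)) 0) := by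
            refine tsum_congr fun j => ?_
            rw [max_zero_sub_max_neg_zero_eq_self]
        _ = (∑' j, max (g j x) 0) - ∑' j, max (-(g j x)) 0 := hu.tsum_sub hv
        _ = Pp x - Nn x := by rw [hPp, hNn]
    · have hS : ¬ S x ≠ ⊤ := by
        intro hS
        apply h
        have h1 := ENNReal.tsum_coe_ne_top_iff_summable.1 hS
        have h2 := NNReal.summable_coe.2 h1
        exact summable_norm_iff.1 (by simpa [coe_nnnorm] using h2)
      rw [if_neg hS, tsum_eq_zero_of_not_summable h]
  rw [key]
  have hS : AEMeasurable S μ := AEMeasurable.ennreal_tsum fun j => (hg j).nnnorm.coe_nnreal_ennreal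
  have hPp : AEMeasurable Pp μ := (AEMeasurable.ennreal_tsum fun j =>
    ENNReal.measurable_ofReal.comp_aemeasurable (hg j)).ennreal_toReal
  have hNn : AEMeasurable Nn μ := (AEMeasurable.ennreal_tsum fun j =>
    ENNReal.measurable_ofReal.comp_aemeasurable (hg j).neg).ennreal_toReal
  have hout : Measurable (fun y : ℝ≥0∞ × ℝ × ℝ => if y.1 ≠ ⊤ then y.2.1 - y.2.2 else 0) := by
    have hset : MeasurableSet {y : ℝ≥0∞ × ℝ × ℝ | y.1 ≠ ⊤} :=
      measurable_fst (measurableSet_singleton ⊤).compl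
    exact Measurable.ite hset ((measurable_fst.comp measurable_snd).sub
      (measurable_snd.comp measurable_snd)) measurable_const
  exact hout.comp_aemeasurable (hS.prodMk (hPp.prodMk hNn))

end AuxLemmas

private lemma aux_holder {J : Type*} [Countable J] {p q : ℝ} (hpq : p.HolderConjugate q)
    (a b : J → ℝ≥0∞) :
    ∑' j, a j ^ (1 / p) * b j ^ (1 / q) ≤ (∑' j, a j) ^ (1 / p) * (∑' j, b j) ^ (1 / q) := by
  letI : MeasurableSpace J := ⊤
  haveI : MeasurableSingletonClass J := ⟨fun _ => trivial⟩
  have h := ENNReal.lintegral_mul_le_Lp_mul_Lq (Measure.count : Measure J) hpq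
    (f := fun j => a j ^ (1 / p)) (g := fun j => b j ^ (1 / q))
    measurable_from_top.aemeasurable measurable_from_top.aemeasurable
  have ha : ∀ j, (a j ^ (1 / p)) ^ p = a j := fun j => by
    rw [← ENNReal.rpow_mul, one_div, inv_mul_cancel₀ hpq.pos.ne', ENNReal.rpow_one]
  have hb : ∀ j, (b j ^ (1 / q)) ^ q = b j := fun j => by
    rw [← ENNReal.rpow_mul, one_div, inv_mul_cancel₀ hpq.symm.pos.ne', ENNReal.rpow_one]
  simp only [Pi.mul_apply, lintegral_count, ha, hb] at h
  exact h

private lemma holder_step {J : Type*} [Countable J] {p : ℝ} (hp : 1 < p) (g r : J → ℝ)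
    (hr : ∀ j, 0 < r j) {ri K : ℝ} (hri : 0 < ri) (hK : 0 ≤ K)
    (hadm : (∑' j, ENNReal.ofReal (r j ^ (-(1 / (p - 1))))) ^ (p - 1) ≤ ENNReal.ofReal (K / ri)) :
    ENNReal.ofReal (|∑' j, g j| ^ p * ri) ≤
      ENNReal.ofReal K * ∑' j, ENNReal.ofReal (|g j| ^ p * r j) := by
  have hp0 : (0:ℝ) < p := lt_trans one_pos hp
  have hp1 : (0:ℝ) < p - 1 := by linarith
  by_cases hsum : Summable g
  case neg =>
    rw [tsum_eq_zero_of_not_summable hsum]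
    simp [abs_zero, Real.zero_rpow hp0.ne']
  case pos =>
  set q := p / (p - 1) with hq
  have hpq : p.HolderConjugate q := (Real.holderConjugate_iff_eq_conjExponent hp).2 hq
  have habs : Summable fun j => |g j| := hsum.abs
  set a : J → ℝ≥0∞ := fun j => ENNReal.ofReal (|g j| ^ p * r j) with hadef
  set b : J → ℝ≥0∞ := fun j => ENNReal.ofReal (r j ^ (-(1 / (p - 1)))) with hbdef
  have hq_inv : 1 / q = (p - 1) / p := by rw [hq]; field_simp
  have hq_nonneg : (0:ℝ) ≤ 1 / q := by rw [hq_inv]; positivity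
  have key : ∀ j, ENNReal.ofReal |g j| = a j ^ (1 / p) * b j ^ (1 / q) := by
    intro j
    have e1 : (-(1 / (p - 1))) * (1 / q) = -(1/p) := by
      rw [hq_inv]; field_simp
    rw [hadef, hbdef]
    rw [ENNReal.ofReal_rpow_of_nonneg (mul_nonneg (by positivity) (hr j).le) (by positivity),
        ENNReal.ofReal_rpow_of_nonneg (Real.rpow_nonneg (hr j).le _) hq_nonneg,
        ← ENNReal.ofReal_mul (Real.rpow_nonneg (mul_nonneg (by positivity) (hr j).le) _)]
    congr 1
    symm
    calc (|g j| ^ p * r j) ^ (1/p) * (r j ^ (-(1/(p-1)))) ^ (1/q)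
        = |g j| * (r j ^ (1/p) * r j ^ (-(1/p))) := by
          rw [Real.mul_rpow (by positivity) (hr j).le, ← Real.rpow_mul (abs_nonneg _),
            mul_one_div_cancel hp0.ne', Real.rpow_one, ← Real.rpow_mul (hr j).le, e1, mul_assoc]
      _ = |g j| := by
          rw [← Real.rpow_add (hr j), add_neg_cancel, Real.rpow_zero, mul_one]
  have h1 : ENNReal.ofReal |∑' j, g j| ≤ ∑' j, a j ^ (1/p) * b j ^ (1/q) := by
    have habs' : |∑' j, g j| ≤ ∑' j, |g j| := by
      simpa [Real.norm_eq_abs] using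
        norm_tsum_le_tsum_norm (f := g) (by simpa [Real.norm_eq_abs] using habs)
    calc ENNReal.ofReal |∑' j, g j| ≤ ENNReal.ofReal (∑' j, |g j|) :=
          ENNReal.ofReal_le_ofReal habs'
      _ = ∑' j, ENNReal.ofReal |g j| :=
          ENNReal.ofReal_tsum_of_nonneg (fun j => abs_nonneg _) habs
      _ = ∑' j, a j ^ (1/p) * b j ^ (1/q) := tsum_congr key
  have h3 : (∑' j, b j) ^ (1/q) ≤ ENNReal.ofReal (K / ri) ^ (1/p) := by
    have e2 : (∑' j, b j) ^ (1/q) = ((∑' j, b j) ^ (p-1)) ^ (1/p) := by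
      rw [← ENNReal.rpow_mul]
      congr 1
      rw [hq_inv]; ring
    rw [e2]
    exact ENNReal.rpow_le_rpow hadm (by positivity)
  have h4 : ENNReal.ofReal |∑' j, g j| ≤ (∑' j, a j) ^ (1/p) * ENNReal.ofReal (K / ri) ^ (1/p) :=
    h1.trans ((aux_holder hpq a b).trans (mul_le_mul_right h3 _))
  calc ENNReal.ofReal (|∑' j, g j| ^ p * ri)
      = ENNReal.ofReal |∑' j, g j| ^ p * ENNReal.ofReal ri := by
        rw [ENNReal.ofReal_rpow_of_nonneg (abs_nonneg _) hp0.le,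
          ← ENNReal.ofReal_mul (by positivity)]
    _ ≤ ((∑' j, a j) ^ (1/p) * ENNReal.ofReal (K / ri) ^ (1/p)) ^ p * ENNReal.ofReal ri := by
        exact mul_le_mul_left (ENNReal.rpow_le_rpow h4 hp0.le) _
    _ = (∑' j, a j) * ENNReal.ofReal (K / ri) * ENNReal.ofReal ri := by
        rw [ENNReal.mul_rpow_of_nonneg _ _ hp0.le, ← ENNReal.rpow_mul, ← ENNReal.rpow_mul,
          one_div_mul_cancel hp0.ne', ENNReal.rpow_one, ENNReal.rpow_one]
    _ = ENNReal.ofReal K * ∑' j, a j := by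
        rw [mul_assoc, ← ENNReal.ofReal_mul (by positivity), div_mul_cancel₀ _ hri.ne',
          mul_comm]

private lemma map_add_restrict (c : ℝ) {S : Set ℝ} (hS : MeasurableSet S) :
    (volume.restrict ((fun x => x + c) ⁻¹' S)).map (fun x => x + c) = volume.restrict S := by
  rw [← Measure.restrict_map (measurable_add_const c) hS, map_add_right_eq_self]

private lemma lint_shift (H : ℝ → ℝ≥0∞) (c : ℝ) {S : Set ℝ} (hS : MeasurableSet S) :
    ∫⁻ x in (fun x => x + c) ⁻¹' S, H (x + c) = ∫⁻ y in S, H y := by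
  rw [← map_add_restrict c hS, (measurableEmbedding_addRight c).lintegral_map]

private lemma aemeasurable_shift {β : Type*} [MeasurableSpace β] {H : ℝ → β} (c : ℝ)
    {S : Set ℝ} (hS : MeasurableSet S) (h : AEMeasurable H (volume.restrict S)) :
    AEMeasurable (fun x => H (x + c)) (volume.restrict ((fun x => x + c) ⁻¹' S)) := by
  rw [← map_add_restrict c hS] at h
  exact h.comp_measurable (measurable_add_const c)

private lemma ae_shift {Q : ℝ → Prop} (c : ℝ) {S : Set ℝ} (hS : MeasurableSet S)
    (h : ∀ᵐ x ∂volume.restrict S, Q x) :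
    ∀ᵐ x ∂volume.restrict ((fun x => x + c) ⁻¹' S), Q (x + c) :=
  (MeasurePreserving.quasiMeasurePreserving
    ⟨measurable_add_const c, map_add_restrict c hS⟩).ae h


private lemma tsum_Mset_le {I : Type*} [Countable I] (P : I → Option I) (n : ℕ)
    (g : I → ℝ≥0∞) :
    ∑' i, ∑' j : Mset P n i, g (j : I) ≤ ∑' j : I, g j := by
  have hinj : Function.Injective fun x : Σ i, (Mset P n i : Set I) => (x.2 : I) := by
    rintro ⟨i1, j1, hj1⟩ ⟨i2, j2, hj2⟩ h
    simp only at h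
    subst h
    have : some i1 = some i2 := hj1.symm.trans hj2
    cases this
    rfl
  calc ∑' i, ∑' j : Mset P n i, g (j : I)
      = ∑' x : Σ i, (Mset P n i : Set I), g ((x.2 : I)) :=
        (ENNReal.tsum_sigma' (fun x : Σ i, (Mset P n i : Set I) => g (x.2 : I))).symm
    _ ≤ ∑' j : I, g j := tsum_comp_le_tsum_of_injective hinj g

set_option maxHeartbeats 1000000 in
private lemma piece_bound {I : Type*} [Countable I]
    (P : I → Option I) {p : ℝ} (hp : 1 < p) (ρ : I → ℝ → ℝ) (hρ : IsWeight ρ)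
    {M w t : ℝ} (hK : 0 ≤ M ^ p * Real.exp (p * w * t))
    (hadm : ∀ i, ∀ᵐ s ∂(volume.restrict (Set.Icc (0:ℝ) 1)),
      (∑' j : Mset P (nfl t s) i,
          ENNReal.ofReal ((ρ (j : I) (s + t - (nfl t s : ℝ))) ^ (-(1 / (p - 1))))) ^ (p - 1)
        ≤ ENNReal.ofReal (M ^ p * Real.exp (p * w * t) / ρ i s))
    (f : I → ℝ → ℝ) (hf : ∀ j, AEMeasurable (f j) (volume.restrict (Set.Icc (0:ℝ) 1)))
    {n : ℕ} {c : ℝ} (hc : (n : ℝ) + c = t)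
    {S : Set ℝ} (hS : MeasurableSet S) (hS1 : S ⊆ Set.Icc 0 1)
    (hA1 : (fun x => x + c) ⁻¹' S ⊆ Set.Icc 0 1)
    (hn : ∀ s ∈ (fun x => x + c) ⁻¹' S, nfl t s = n) (i : I) :
    AEMeasurable (Tleft P f t i) (volume.restrict ((fun x => x + c) ⁻¹' S)) ∧
    ∫⁻ s in (fun x => x + c) ⁻¹' S, ENNReal.ofReal (|Tleft P f t i s| ^ p * ρ i s) ≤
      ENNReal.ofReal (M ^ p * Real.exp (p * w * t)) *
        ∑' j : Mset P n i, ∫⁻ x in S, ENNReal.ofReal (|f (j:I) x| ^ p * ρ (j:I) x) := by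
  have hp0 : (0:ℝ) < p := lt_trans one_pos hp
  set A : Set ℝ := (fun x => x + c) ⁻¹' S with hAdef
  have hAmeas : MeasurableSet A := hS.preimage (measurable_add_const c)
  have hres_mono : volume.restrict A ≤ volume.restrict (Set.Icc (0:ℝ) 1) :=
    Measure.restrict_mono hA1 le_rfl
  have hres_monoS : volume.restrict S ≤ volume.restrict (Set.Icc (0:ℝ) 1) :=
    Measure.restrict_mono hS1 le_rfl
  -- pointwise identification of Tleft on A
  have T_eq : ∀ s ∈ A, Tleft P f t i s = ∑' j : Mset P n i, f (j : I) (s + c) := by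
    intro s hs
    have h1 : nfl t s = n := hn s hs
    have h2 : t + s - (n : ℝ) = s + c := by rw [← hc]; ring
    simp only [Tleft]
    rw [h1, h2]
  -- a.e. measurability of the components shifted to A
  have hF : ∀ (j : I), AEMeasurable (fun x => ENNReal.ofReal (|f j x| ^ p * ρ j x))
      (volume.restrict S) := by
    intro j
    have h1 : AEMeasurable (f j) (volume.restrict S) := (hf j).mono_measure hres_monoS
    have h2 : AEMeasurable (ρ j) (volume.restrict S) :=
      ((hρ.integrable j).aestronglyMeasurable.aemeasurable).mono_measure hres_monoS
    have heq : (fun x => ENNReal.ofReal (|f j x| ^ p * ρ j x))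
        = fun x => ENNReal.ofReal (|f j x| ^ p) * ENNReal.ofReal (ρ j x) := by
      funext x; rw [ENNReal.ofReal_mul (by positivity)]
    rw [heq]
    have hcont : Continuous fun y : ℝ => ENNReal.ofReal (|y| ^ p) :=
      ENNReal.continuous_ofReal.comp ((Real.continuous_rpow_const hp0.le).comp continuous_abs)
    exact (hcont.measurable.comp_aemeasurable h1).mul (ENNReal.continuous_ofReal.measurable.comp_aemeasurable h2)
  have hFA : ∀ j : I, AEMeasurable (fun s => ENNReal.ofReal (|f j (s + c)| ^ p * ρ j (s + c)))
      (volume.restrict A) := fun j =>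
    aemeasurable_shift (H := fun x => ENNReal.ofReal (|f j x| ^ p * ρ j x)) c hS (hF j)
  -- a.e. facts
  have e_mem : ∀ᵐ s ∂(volume.restrict A), s ∈ A := ae_restrict_mem hAmeas
  have e_adm := ae_restrict_of_ae_restrict_of_subset hA1 (hadm i)
  have e_posi := ae_restrict_of_ae_restrict_of_subset hA1 (hρ.pos i)
  have e_posj : ∀ᵐ s ∂(volume.restrict A), ∀ j : I, 0 < ρ j (s + c) := by
    rw [ae_all_iff]
    intro j
    exact ae_shift (Q := fun x => 0 < ρ j x) c hS
      (ae_restrict_of_ae_restrict_of_subset hS1 (hρ.pos j))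
  constructor
  · -- a.e. measurability of Tleft on A
    have hmeas : AEMeasurable (fun s => ∑' j : Mset P n i, f (j : I) (s + c))
        (volume.restrict A) := by
      exact aux_tsum_aemeasurable fun j : (Mset P n i : Set I) =>
        aemeasurable_shift (H := f (j : I)) c hS ((hf (j : I)).mono_measure hres_monoS)
    refine hmeas.congr ?_
    filter_upwards [e_mem] with s hs
    exact (T_eq s hs).symm
  · -- the integral bound
    have hptwise : ∀ᵐ s ∂(volume.restrict A),
        ENNReal.ofReal (|Tleft P f t i s| ^ p * ρ i s) ≤
          ENNReal.ofReal (M ^ p * Real.exp (p * w * t)) *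
            ∑' j : Mset P n i, ENNReal.ofReal (|f (j:I) (s + c)| ^ p * ρ (j:I) (s + c)) := by
      filter_upwards [e_adm, e_posi, e_posj, e_mem] with s hadm' hpi hpj hsA
      rw [T_eq s hsA]
      have h1 : nfl t s = n := hn s hsA
      have h2 : s + t - (n : ℝ) = s + c := by rw [← hc]; ring
      rw [h1, h2] at hadm'
      exact holder_step hp (fun j : (Mset P n i : Set I) => f (j:I) (s + c))
        (fun j => ρ (j:I) (s + c)) (fun j => hpj _) hpi hK hadm'
    calc ∫⁻ s in A, ENNReal.ofReal (|Tleft P f t i s| ^ p * ρ i s)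
        ≤ ∫⁻ s in A, ENNReal.ofReal (M ^ p * Real.exp (p * w * t)) *
            ∑' j : Mset P n i, ENNReal.ofReal (|f (j:I) (s + c)| ^ p * ρ (j:I) (s + c)) :=
          lintegral_mono_ae hptwise
      _ = ENNReal.ofReal (M ^ p * Real.exp (p * w * t)) *
            ∫⁻ s in A, ∑' j : Mset P n i, ENNReal.ofReal (|f (j:I) (s + c)| ^ p * ρ (j:I) (s + c)) :=
          lintegral_const_mul' _ _ ENNReal.ofReal_ne_top
      _ = ENNReal.ofReal (M ^ p * Real.exp (p * w * t)) *
            ∑' j : Mset P n i, ∫⁻ s in A, ENNReal.ofReal (|f (j:I) (s + c)| ^ p * ρ (j:I) (s + c)) := by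
          congr 1
          exact lintegral_tsum fun j : (Mset P n i : Set I) => hFA (j : I)
      _ = ENNReal.ofReal (M ^ p * Real.exp (p * w * t)) *
            ∑' j : Mset P n i, ∫⁻ x in S, ENNReal.ofReal (|f (j:I) x| ^ p * ρ (j:I) x) := by
          congr 1
          exact tsum_congr fun j =>
            lint_shift (fun x => ENNReal.ofReal (|f (j:I) x| ^ p * ρ (j:I) x)) c hS


/-- **Proposition 2.2 (b), sufficiency**.  Let `1 < p < ∞`, `ρ` a weight on `L(G)`, `M ≥ 1`,
`w ∈ ℝ`, and assume that for all `i ∈ I`, all `t ≥ 0` and almost every `s ∈ [0,1]`,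
`(∑_{j ∈ M_{n(t,s)}(i)} ρ_j(s + t - n(t,s))^{-1/(p-1)})^{p-1} ≤ M^p e^{pwt} / ρ_i(s)`.
Then for every `t ≥ 0` and every `f ∈ L^p_ρ(L(G))`, the translated family `T_t f` belongs to
`L^p_ρ(L(G))` and `‖T_t f‖_{p,ρ} ≤ M e^{wt} ‖f‖_{p,ρ}`. -/
theorem translation_bounded_Lp {I : Type*} [Countable I] [Nonempty I]
    (P : I → Option I) (p : ℝ) (hp : 1 < p)
    (ρ : I → ℝ → ℝ) (hρ : IsWeight ρ) (M w : ℝ) (hM : 1 ≤ M)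
    (hadm : ∀ i, ∀ t ≥ (0 : ℝ), ∀ᵐ s ∂(volume.restrict (Set.Icc (0 : ℝ) 1)),
      (∑' j : Mset P (nfl t s) i,
          ENNReal.ofReal ((ρ (j : I) (s + t - (nfl t s : ℝ))) ^ (-(1 / (p - 1))))) ^ (p - 1)
        ≤ ENNReal.ofReal (M ^ p * Real.exp (p * w * t) / ρ i s)) :
    ∀ t ≥ (0 : ℝ), ∀ f, memLprho ρ p f →
      memLprho ρ p (Tleft P f t) ∧
      enorm' ρ p (Tleft P f t) ≤ ENNReal.ofReal (M * Real.exp (w * t)) * enorm' ρ p f := by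
  intro t ht f hf
  have hp0 : (0:ℝ) < p := lt_trans one_pos hp
  set n0 : ℕ := ⌊t⌋₊ with hn0
  set τ : ℝ := t - n0 with hτ
  have hfl : (n0 : ℝ) ≤ t := Nat.floor_le ht
  have hfl2 : t < (n0 : ℝ) + 1 := Nat.lt_floor_add_one t
  have hτ0 : 0 ≤ τ := by rw [hτ]; linarith
  have hτ1 : τ < 1 := by rw [hτ]; linarith
  have hK : 0 ≤ M ^ p * Real.exp (p * w * t) :=
    mul_nonneg (Real.rpow_nonneg (by linarith) _) (Real.exp_pos _).le
  set Cp : ℝ≥0∞ := ENNReal.ofReal (M ^ p * Real.exp (p * w * t)) with hCp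
  set A : Set ℝ := Set.Ico 0 (1 - τ) with hA
  set B : Set ℝ := Set.Icc (1 - τ) 1 with hB
  have hA_pre : A = (fun x => x + τ) ⁻¹' (Set.Ico τ 1) := by
    ext x
    simp only [hA, Set.mem_preimage, Set.mem_Ico]
    constructor
    · rintro ⟨h1, h2⟩; exact ⟨by linarith, by linarith⟩
    · rintro ⟨h1, h2⟩; exact ⟨by linarith, by linarith⟩
  have hB_pre : B = (fun x => x + (τ - 1)) ⁻¹' (Set.Icc 0 τ) := by
    ext x
    simp only [hB, Set.mem_preimage, Set.mem_Icc]
    constructor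
    · rintro ⟨h1, h2⟩; exact ⟨by linarith, by linarith⟩
    · rintro ⟨h1, h2⟩; exact ⟨by linarith, by linarith⟩
  have hc_A : (n0 : ℝ) + τ = t := by rw [hτ]; ring
  have hc_B : ((n0 + 1 : ℕ) : ℝ) + (τ - 1) = t := by push_cast; rw [hτ]; ring
  have hnA : ∀ s ∈ A, nfl t s = n0 := by
    intro s hs
    have h1 : (0:ℝ) ≤ s := hs.1
    have h2 : s < 1 - τ := hs.2
    simp only [nfl]
    refine (Nat.floor_eq_iff (by linarith)).2 ⟨by linarith, ?_⟩
    rw [hτ] at h2; linarith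
  have hnB : ∀ s ∈ B, nfl t s = n0 + 1 := by
    intro s hs
    have h1 : 1 - τ ≤ s := hs.1
    have h2 : s ≤ 1 := hs.2
    simp only [nfl]
    refine (Nat.floor_eq_iff (by linarith)).2 ⟨?_, ?_⟩
    · push_cast; rw [hτ] at h1; linarith
    · push_cast; rw [hτ] at h1; linarith
  have hA_sub : A ⊆ Set.Icc 0 1 := fun x hx => ⟨hx.1, by have := hx.2; linarith⟩
  have hB_sub : B ⊆ Set.Icc 0 1 := fun x hx => ⟨by have := hx.1; linarith, hx.2⟩
  have hSA : MeasurableSet (Set.Ico τ 1) := measurableSet_Ico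
  have hSB : MeasurableSet (Set.Icc (0:ℝ) τ) := measurableSet_Icc
  have hSA_sub : Set.Ico τ 1 ⊆ Set.Icc 0 1 := fun x hx => ⟨le_trans hτ0 hx.1, hx.2.le⟩
  have hSB_sub : Set.Icc (0:ℝ) τ ⊆ Set.Icc 0 1 := fun x hx => ⟨hx.1, le_trans hx.2 hτ1.le⟩
  rw [hA_pre] at hA_sub hnA
  rw [hB_pre] at hB_sub hnB
  have PA := fun i => piece_bound P hp ρ hρ hK (fun i => hadm i t ht) f hf.1 hc_A hSA
    hSA_sub hA_sub hnA i
  have PB := fun i => piece_bound P hp ρ hρ hK (fun i => hadm i t ht) f hf.1 hc_B hSB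
    hSB_sub hB_sub hnB i
  have hunion : A ∪ B = Set.Icc 0 1 := by
    rw [hA, hB]; exact Set.Ico_union_Icc_eq_Icc (by linarith) (by linarith)
  have hdisj : Disjoint A B := by
    rw [Set.disjoint_left]
    intro x hx hx'
    have h2 : x < 1 - τ := hx.2
    have h1 : 1 - τ ≤ x := hx'.1
    linarith
  have hsplit : ∀ g : ℝ → ℝ≥0∞,
      ∫⁻ s in Set.Icc (0:ℝ) 1, g s = (∫⁻ s in A, g s) + ∫⁻ s in B, g s := by
    intro g
    rw [← hunion, lintegral_union (hB ▸ measurableSet_Icc) hdisj]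
  have hmeasT : ∀ i, AEMeasurable (Tleft P f t i) (volume.restrict (Set.Icc (0:ℝ) 1)) := by
    intro i
    rw [← hunion]
    refine aemeasurable_union_iff.2 ⟨?_, ?_⟩
    · rw [hA_pre]; exact (PA i).1
    · rw [hB_pre]; exact (PB i).1
  have hbound : pnorm ρ p (Tleft P f t) ≤ Cp * pnorm ρ p f := by
    have step1 : ∀ i, ∫⁻ s in Set.Icc (0:ℝ) 1, ENNReal.ofReal (|Tleft P f t i s| ^ p * ρ i s)
        ≤ Cp * ((∑' j : Mset P n0 i,
              ∫⁻ x in Set.Ico τ 1, ENNReal.ofReal (|f (j:I) x| ^ p * ρ (j:I) x))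
            + ∑' j : Mset P (n0+1) i,
              ∫⁻ x in Set.Icc (0:ℝ) τ, ENNReal.ofReal (|f (j:I) x| ^ p * ρ (j:I) x)) := by
      intro i
      rw [hsplit, mul_add]
      refine add_le_add ?_ ?_
      · have h := (PA i).2; rw [← hA_pre] at h; exact h
      · have h := (PB i).2; rw [← hB_pre] at h; exact h
    have hd2 : Disjoint (Set.Ico (0:ℝ) τ) (Set.Ico τ 1) := by
      rw [Set.disjoint_left]
      intro x hx hx'
      have := hx.2
      have := hx'.1
      linarith
    calc pnorm ρ p (Tleft P f t)
        ≤ ∑' i, Cp * ((∑' j : Mset P n0 i,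
              ∫⁻ x in Set.Ico τ 1, ENNReal.ofReal (|f (j:I) x| ^ p * ρ (j:I) x))
            + ∑' j : Mset P (n0+1) i,
              ∫⁻ x in Set.Icc (0:ℝ) τ, ENNReal.ofReal (|f (j:I) x| ^ p * ρ (j:I) x)) :=
          ENNReal.tsum_le_tsum step1
      _ = Cp * ((∑' i, ∑' j : Mset P n0 i,
              ∫⁻ x in Set.Ico τ 1, ENNReal.ofReal (|f (j:I) x| ^ p * ρ (j:I) x))
            + ∑' i, ∑' j : Mset P (n0+1) i,
              ∫⁻ x in Set.Icc (0:ℝ) τ, ENNReal.ofReal (|f (j:I) x| ^ p * ρ (j:I) x)) := by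
          rw [ENNReal.tsum_mul_left, ENNReal.tsum_add]
      _ ≤ Cp * ((∑' j : I, ∫⁻ x in Set.Ico τ 1, ENNReal.ofReal (|f j x| ^ p * ρ j x))
            + ∑' j : I, ∫⁻ x in Set.Icc (0:ℝ) τ, ENNReal.ofReal (|f j x| ^ p * ρ j x)) :=
          mul_le_mul_right (add_le_add
            (tsum_Mset_le P n0 (fun j => ∫⁻ x in Set.Ico τ 1,
              ENNReal.ofReal (|f j x| ^ p * ρ j x)))
            (tsum_Mset_le P (n0+1) (fun j => ∫⁻ x in Set.Icc (0:ℝ) τ,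
              ENNReal.ofReal (|f j x| ^ p * ρ j x)))) _
      _ = Cp * ∑' j : I, ((∫⁻ x in Set.Ico τ 1, ENNReal.ofReal (|f j x| ^ p * ρ j x))
            + ∫⁻ x in Set.Icc (0:ℝ) τ, ENNReal.ofReal (|f j x| ^ p * ρ j x)) := by
          rw [ENNReal.tsum_add]
      _ ≤ Cp * pnorm ρ p f := by
          refine mul_le_mul_right (ENNReal.tsum_le_tsum fun j => ?_) _
          have e1 : ∫⁻ x in Set.Icc (0:ℝ) τ, ENNReal.ofReal (|f j x| ^ p * ρ j x)
              = ∫⁻ x in Set.Ico (0:ℝ) τ, ENNReal.ofReal (|f j x| ^ p * ρ j x) :=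
            setLIntegral_congr (MeasureTheory.Ico_ae_eq_Icc).symm
          calc (∫⁻ x in Set.Ico τ 1, ENNReal.ofReal (|f j x| ^ p * ρ j x))
                + ∫⁻ x in Set.Icc (0:ℝ) τ, ENNReal.ofReal (|f j x| ^ p * ρ j x)
              = (∫⁻ x in Set.Ico (0:ℝ) τ, ENNReal.ofReal (|f j x| ^ p * ρ j x))
                + ∫⁻ x in Set.Ico τ 1, ENNReal.ofReal (|f j x| ^ p * ρ j x) := by
                rw [e1, add_comm]
            _ = ∫⁻ x in Set.Ico (0:ℝ) 1, ENNReal.ofReal (|f j x| ^ p * ρ j x) := by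
                rw [← lintegral_union measurableSet_Ico hd2,
                  Set.Ico_union_Ico_eq_Ico hτ0 hτ1.le]
            _ ≤ ∫⁻ x in Set.Icc (0:ℝ) 1, ENNReal.ofReal (|f j x| ^ p * ρ j x) :=
                lintegral_mono_set Set.Ico_subset_Icc_self
  refine ⟨⟨hmeasT, ?_⟩, ?_⟩
  · exact lt_of_le_of_lt hbound (ENNReal.mul_lt_top ENNReal.ofReal_lt_top hf.2)
  · have h := ENNReal.rpow_le_rpow hbound (by positivity : (0:ℝ) ≤ 1/p)
    rw [ENNReal.mul_rpow_of_nonneg _ _ (by positivity)] at h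
    have hCp1 : Cp ^ (1/p) = ENNReal.ofReal (M * Real.exp (w * t)) := by
      have hMe : (0:ℝ) ≤ M * Real.exp (w * t) := mul_nonneg (by linarith) (Real.exp_pos _).le
      have e : M ^ p * Real.exp (p * w * t) = (M * Real.exp (w * t)) ^ p := by
        rw [Real.mul_rpow (by linarith) (Real.exp_pos _).le, ← Real.exp_mul]
        have : w * t * p = p * w * t := by ring
        rw [this]
      rw [hCp, e, ← ENNReal.ofReal_rpow_of_nonneg hMe hp0.le, ← ENNReal.rpow_mul,
        mul_one_div_cancel hp0.ne', ENNReal.rpow_one]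
    simp only [enorm']
    rw [← hCp1]
    exact h

end
end

section
/- Let 1 ≤ p < ∞ and let ρ be a p-admissible weight on L(G) with constants M ≥ 1 and w ∈ ℝ. Then for every family g = (g_i)_{i∈I} such that each g_i : [0,1] → ℝ is continuous and g_i = 0 for all but finitely many i ∈ I, one has lim_{t→0⁺} ‖T_t g − g‖_{p,ρ} = 0. -/
open MeasureTheory ENNReal Filter

noncomputable section

variable {I : Type*}

/-- Auxiliary: bound on the absolute value of a `tsum` over a subtype, for a finitely
supported function. -/
lemma abs_tsum_subtype_le {I : Type*} (A : Set I) (h : I → ℝ) (s : Finset I)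
    (hs : ∀ j ∉ s, h j = 0) (C : I → ℝ) (hC : ∀ j, |h j| ≤ C j) (hC0 : ∀ j, 0 ≤ C j) :
    |∑' j : A, h (j : I)| ≤ ∑ j ∈ s, C j := by
  classical
  set T : Finset A := s.preimage Subtype.val (Subtype.val_injective.injOn) with hTdef
  have hT : ∀ b : A, b ∉ T → h (b : I) = 0 := by
    intro b hb
    exact hs _ (by simpa [hTdef, Finset.mem_preimage] using hb)
  rw [tsum_eq_sum hT]
  calc |∑ b ∈ T, h (b : I)| ≤ ∑ b ∈ T, |h (b : I)| := Finset.abs_sum_le_sum_abs _ _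
    _ ≤ ∑ b ∈ T, C (b : I) := Finset.sum_le_sum fun b _ => hC _
    _ = ∑ j ∈ T.image Subtype.val, C j := by
        rw [Finset.sum_image (fun x _ y _ hxy => Subtype.val_injective hxy)]
    _ ≤ ∑ j ∈ s, C j := by
        refine Finset.sum_le_sum_of_subset_of_nonneg ?_ fun j _ _ => hC0 j
        intro j hj
        obtain ⟨b, hb, rfl⟩ := Finset.mem_image.mp hj
        simpa [hTdef, Finset.mem_preimage] using hb

/-- Auxiliary: the weighted mass of the tail interval `[1-t, 1]` tends to `0` as `t → 0⁺`. -/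
lemma tendsto_tail_lintegral (ρi : ℝ → ℝ) (hint : IntegrableOn ρi (Set.Icc (0 : ℝ) 1)) :
    Filter.Tendsto
      (fun t : ℝ => ∫⁻ s in Set.Icc (1 - t) 1, ENNReal.ofReal (ρi s)
        ∂((volume : Measure ℝ).restrict (Set.Icc (0 : ℝ) 1)))
      (nhdsWithin 0 (Set.Ioi 0)) (nhds 0) := by
  set μ : Measure ℝ :=
    ((volume : Measure ℝ).restrict (Set.Icc (0 : ℝ) 1)).withDensity
      (fun s => ENNReal.ofReal (ρi s)) with hμdef
  have happ : ∀ t : ℝ,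
      (∫⁻ s in Set.Icc (1 - t) 1, ENNReal.ofReal (ρi s)
        ∂((volume : Measure ℝ).restrict (Set.Icc (0 : ℝ) 1))) = μ (Set.Icc (1 - t) 1) :=
    fun t => (withDensity_apply _ measurableSet_Icc).symm
  have hfin : ∀ t : ℝ, μ (Set.Icc (1 - t) 1) ≠ ⊤ := by
    intro t
    refine ne_of_lt (lt_of_le_of_lt (measure_mono (Set.subset_univ _)) ?_)
    rw [hμdef, withDensity_apply _ MeasurableSet.univ, Measure.restrict_univ]
    exact hint.lintegral_lt_top
  have h1 : μ {(1 : ℝ)} = 0 := by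
    rw [hμdef, withDensity_apply _ (measurableSet_singleton 1)]
    refine setLIntegral_measure_zero _ _ ?_
    rw [Measure.restrict_apply (measurableSet_singleton 1)]
    exact measure_mono_null Set.inter_subset_left (measure_singleton 1)
  have hInter : (⋂ n : ℕ, Set.Icc (1 - 1 / (n + 1 : ℝ)) 1) = {(1 : ℝ)} := by
    ext x
    simp only [Set.mem_iInter, Set.mem_Icc, Set.mem_singleton_iff]
    constructor
    · intro hx
      have hx1 : x ≤ 1 := (hx 0).2
      have hx2 : 1 ≤ x := by
        by_contra hc
        push_neg at hc
        obtain ⟨n, hn⟩ := exists_nat_one_div_lt (sub_pos.mpr hc)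
        have := (hx n).1
        linarith
      linarith
    · rintro rfl
      refine fun n => ⟨?_, le_refl 1⟩
      have : (0 : ℝ) < 1 / (n + 1 : ℝ) := by positivity
      linarith
  have hkey : Filter.Tendsto (fun n : ℕ => μ (Set.Icc (1 - 1 / (n + 1 : ℝ)) 1))
      atTop (nhds 0) := by
    have ha : Antitone fun n : ℕ => Set.Icc (1 - 1 / (n + 1 : ℝ)) 1 := by
      intro m n hmn
      refine Set.Icc_subset_Icc ?_ le_rfl
      have h1 : (1 : ℝ) / (n + 1 : ℝ) ≤ 1 / (m + 1 : ℝ) := by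
        apply one_div_le_one_div_of_le (by positivity)
        exact_mod_cast Nat.add_le_add_right hmn 1
      linarith
    have := tendsto_measure_iInter_atTop (μ := μ)
      (s := fun n : ℕ => Set.Icc (1 - 1 / (n + 1 : ℝ)) 1)
      (fun n => measurableSet_Icc.nullMeasurableSet) ha ⟨0, hfin _⟩
    rw [hInter, h1] at this
    exact this
  rw [ENNReal.tendsto_nhds_zero] at hkey ⊢
  intro ε hε
  obtain ⟨n, hn⟩ := (Filter.eventually_atTop).mp (hkey ε hε)
  have hmem : Set.Ioc (0 : ℝ) (1 / (n + 1 : ℝ)) ∈ nhdsWithin (0 : ℝ) (Set.Ioi 0) :=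
    Ioc_mem_nhdsGT_of_mem ⟨le_refl 0, by positivity⟩
  filter_upwards [hmem] with t ht
  rw [happ]
  have hsub : Set.Icc (1 - t) 1 ⊆ Set.Icc (1 - 1 / (n + 1 : ℝ)) 1 :=
    Set.Icc_subset_Icc (by linarith [ht.2]) le_rfl
  exact le_trans (measure_mono hsub) (hn n le_rfl)

/-- Auxiliary: the per-edge integral tends to `0` as `t → 0⁺`. -/
lemma per_edge_tendsto {I : Type*} (P : I → Option I) (p : ℝ) (hp : 1 ≤ p)
    (ρ : I → ℝ → ℝ) (hint : ∀ i, IntegrableOn (ρ i) (Set.Icc (0 : ℝ) 1))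
    (hpos : ∀ i, ∀ s ∈ Set.Icc (0 : ℝ) 1, 0 < ρ i s)
    (g : I → ℝ → ℝ) (hg : ∀ i, ContinuousOn (g i) (Set.Icc (0 : ℝ) 1))
    (hfin : {i | g i ≠ 0}.Finite) (i : I) :
    Filter.Tendsto
      (fun t => ∫⁻ s in Set.Icc (0 : ℝ) 1,
        ENNReal.ofReal (|Tleft P g t i s - g i s| ^ p * ρ i s))
      (nhdsWithin 0 (Set.Ioi 0)) (nhds 0) := by
  classical
  have hp0 : (0 : ℝ) < p := lt_of_lt_of_le one_pos hp
  choose C hC using fun j => isCompact_Icc.exists_bound_of_continuousOn (hg j)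
  have hC0 : ∀ j, 0 ≤ C j := fun j =>
    le_trans (norm_nonneg _) (hC j 0 ⟨le_refl 0, zero_le_one⟩)
  set B : ℝ := (∑ j ∈ hfin.toFinset, C j) + C i with hBdef
  have hB0 : 0 ≤ B := by
    have : (0 : ℝ) ≤ ∑ j ∈ hfin.toFinset, C j := Finset.sum_nonneg fun j _ => hC0 j
    simp only [hBdef]; linarith [hC0 i]
  set R : ℝ≥0∞ := ∫⁻ s in Set.Icc (0 : ℝ) 1, ENNReal.ofReal (ρ i s) with hRdef
  have hRtop : R ≠ ⊤ := ne_of_lt (hint i).lintegral_lt_top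
  set Q : ℝ → ℝ≥0∞ := fun t => ∫⁻ s in Set.Icc (1 - t) 1, ENNReal.ofReal (ρ i s)
      ∂((volume : Measure ℝ).restrict (Set.Icc (0 : ℝ) 1)) with hQdef
  have hQ : Filter.Tendsto Q (nhdsWithin 0 (Set.Ioi 0)) (nhds 0) :=
    tendsto_tail_lintegral (ρ i) (hint i)
  have haemeas : AEMeasurable (fun s => ENNReal.ofReal (ρ i s))
      ((volume : Measure ℝ).restrict (Set.Icc (0 : ℝ) 1)) :=
    ENNReal.measurable_ofReal.comp_aemeasurable (hint i).aemeasurable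
  -- the key pointwise bound, then integral bound
  have hkey : ∀ ε > (0 : ℝ), ∀ δ > (0 : ℝ),
      (∀ x ∈ Set.Icc (0 : ℝ) 1, ∀ y ∈ Set.Icc (0 : ℝ) 1, |x - y| < δ → |g i x - g i y| ≤ ε) →
      ∀ t ∈ Set.Ioo (0 : ℝ) (min δ 1),
      (∫⁻ s in Set.Icc (0 : ℝ) 1,
          ENNReal.ofReal (|Tleft P g t i s - g i s| ^ p * ρ i s))
        ≤ ENNReal.ofReal (ε ^ p) * R + ENNReal.ofReal (B ^ p) * Q t := by
    intro ε hε δ hδ huc t ht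
    have ht0 : 0 < t := ht.1
    have htδ : t < δ := lt_of_lt_of_le ht.2 (min_le_left _ _)
    have ht1 : t < 1 := lt_of_lt_of_le ht.2 (min_le_right _ _)
    have hpt : ∀ s ∈ Set.Icc (0 : ℝ) 1,
        ENNReal.ofReal (|Tleft P g t i s - g i s| ^ p * ρ i s) ≤
          ENNReal.ofReal (ε ^ p) * ENNReal.ofReal (ρ i s) +
          (Set.Icc (1 - t) 1).indicator
            (fun s => ENNReal.ofReal (B ^ p) * ENNReal.ofReal (ρ i s)) s := by
      intro s hs
      obtain ⟨hs0, hs1⟩ := hs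
      rcases lt_or_ge (s + t) 1 with hlt | hge
      · -- small case : translation stays in the same edge
        have hn : nfl t s = 0 := Nat.floor_eq_zero.mpr hlt
        have hMset : Mset P 0 i = {i} := by
          ext j; simp [Mset, pIter]
        have hT : Tleft P g t i s = g i (t + s) := by
          unfold Tleft
          rw [hn, hMset, Nat.cast_zero, sub_zero]
          exact tsum_singleton i (fun j => g j (t + s))
        have hdiff : |Tleft P g t i s - g i s| ≤ ε := by
          rw [hT]
          refine huc (t + s) ⟨by linarith, by linarith⟩ s ⟨hs0, hs1⟩ ?_
          rw [show t + s - s = t by ring, abs_of_pos ht0]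
          exact htδ
        refine le_trans ?_ le_self_add
        rw [← ENNReal.ofReal_mul (by positivity)]
        refine ENNReal.ofReal_le_ofReal ?_
        exact mul_le_mul_of_nonneg_right
          (Real.rpow_le_rpow (abs_nonneg _) hdiff hp0.le) (hpos i s ⟨hs0, hs1⟩).le
      · -- tail case : crossing a vertex, use the uniform bound
        have h2 : s + t < 2 := by linarith
        have hn : nfl t s = 1 := by
          rw [nfl, Nat.floor_eq_iff (by linarith)]
          constructor
          · exact_mod_cast hge
          · push_cast; linarith
        have hx : t + s - 1 ∈ Set.Icc (0 : ℝ) 1 := ⟨by linarith, by linarith⟩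
        have hT : |Tleft P g t i s| ≤ ∑ j ∈ hfin.toFinset, C j := by
          have hTeq : Tleft P g t i s = ∑' j : Mset P 1 i, g (j : I) (t + s - 1) := by
            unfold Tleft
            rw [hn, Nat.cast_one]
          rw [hTeq]
          refine abs_tsum_subtype_le _ (fun j => g j (t + s - 1)) hfin.toFinset ?_ C ?_ hC0
          · intro j hj
            have : g j = 0 := by simpa [Set.Finite.mem_toFinset] using hj
            simp [this]
          · intro j
            simpa [Real.norm_eq_abs] using hC j (t + s - 1) hx
        have hdiff : |Tleft P g t i s - g i s| ≤ B := by
          refine le_trans (abs_sub _ _) ?_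
          rw [hBdef]
          exact add_le_add hT (by simpa [Real.norm_eq_abs] using hC i s ⟨hs0, hs1⟩)
        have hsmem : s ∈ Set.Icc (1 - t) 1 := ⟨by linarith, hs1⟩
        rw [Set.indicator_of_mem hsmem]
        refine le_trans ?_ le_add_self
        rw [← ENNReal.ofReal_mul (by positivity)]
        refine ENNReal.ofReal_le_ofReal ?_
        exact mul_le_mul_of_nonneg_right
          (Real.rpow_le_rpow (abs_nonneg _) hdiff hp0.le) (hpos i s ⟨hs0, hs1⟩).le
    have hmono : (∫⁻ s in Set.Icc (0 : ℝ) 1,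
        ENNReal.ofReal (|Tleft P g t i s - g i s| ^ p * ρ i s)) ≤
        ∫⁻ s in Set.Icc (0 : ℝ) 1,
          (ENNReal.ofReal (ε ^ p) * ENNReal.ofReal (ρ i s) +
          (Set.Icc (1 - t) 1).indicator
            (fun s => ENNReal.ofReal (B ^ p) * ENNReal.ofReal (ρ i s)) s) := by
      refine lintegral_mono_ae ?_
      filter_upwards [ae_restrict_mem measurableSet_Icc] with s hs
      exact hpt s hs
    refine le_trans hmono ?_
    rw [lintegral_add_left' (haemeas.const_mul _)]
    refine add_le_add ?_ ?_
    · rw [lintegral_const_mul' _ _ ENNReal.ofReal_ne_top]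
    · rw [lintegral_indicator measurableSet_Icc,
        lintegral_const_mul' _ _ ENNReal.ofReal_ne_top]
  -- now conclude
  rw [ENNReal.tendsto_nhds_zero]
  intro η hη
  rcases eq_or_ne η ⊤ with rfl | hηtop
  · exact Filter.Eventually.of_forall fun t => le_top
  have hη2 : (0 : ℝ≥0∞) < η / 2 := ENNReal.half_pos (ne_of_gt hη)
  -- choose ε
  set c : ℝ≥0∞ := (η / 2) / (R + 1) with hcdef
  have hc0 : c ≠ 0 := ne_of_gt (ENNReal.div_pos (ne_of_gt hη2)
    (by simp [ENNReal.add_ne_top, hRtop]))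
  have hctop : c ≠ ⊤ := ne_of_lt (ENNReal.div_lt_top
    (by simp [ENNReal.div_eq_top, hηtop]) (by simp))
  set ε : ℝ := c.toReal ^ (1 / p) with hεdef
  have hε0 : 0 < ε := Real.rpow_pos_of_pos (ENNReal.toReal_pos hc0 hctop) _
  have hεp : ε ^ p = c.toReal := by
    rw [hεdef, ← Real.rpow_mul ENNReal.toReal_nonneg, one_div_mul_cancel (ne_of_gt hp0),
      Real.rpow_one]
  have hεR : ENNReal.ofReal (ε ^ p) * R ≤ η / 2 := by
    rw [hεp, ENNReal.ofReal_toReal hctop, hcdef]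
    calc (η / 2) / (R + 1) * R ≤ (η / 2) / (R + 1) * (R + 1) := by
          gcongr; exact le_self_add
      _ = η / 2 := ENNReal.div_mul_cancel (by simp) (by simp [ENNReal.add_ne_top, hRtop])
  -- δ from uniform continuity
  have huc := (isCompact_Icc.uniformContinuousOn_of_continuous (hg i))
  rw [Metric.uniformContinuousOn_iff] at huc
  obtain ⟨δ, hδ0, hδ⟩ := huc ε hε0
  have hδ' : ∀ x ∈ Set.Icc (0 : ℝ) 1, ∀ y ∈ Set.Icc (0 : ℝ) 1, |x - y| < δ →
      |g i x - g i y| ≤ ε := by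
    intro x hx y hy hxy
    have := hδ x hx y hy (by rwa [Real.dist_eq])
    rw [Real.dist_eq] at this
    exact this.le
  -- tail term eventually small
  have hBQ : Filter.Tendsto (fun t => ENNReal.ofReal (B ^ p) * Q t)
      (nhdsWithin 0 (Set.Ioi 0)) (nhds 0) := by
    have := ENNReal.Tendsto.const_mul (a := ENNReal.ofReal (B ^ p)) hQ
      (Or.inr ENNReal.ofReal_ne_top)
    simpa using this
  have hBQ' := (ENNReal.tendsto_nhds_zero.mp hBQ) (η / 2) hη2
  have hmem : Set.Ioo (0 : ℝ) (min δ 1) ∈ nhdsWithin (0 : ℝ) (Set.Ioi 0) :=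
    Ioo_mem_nhdsGT_of_mem ⟨le_refl 0, lt_min hδ0 one_pos⟩
  filter_upwards [hmem, hBQ'] with t htmem htQ
  calc (∫⁻ s in Set.Icc (0 : ℝ) 1,
        ENNReal.ofReal (|Tleft P g t i s - g i s| ^ p * ρ i s))
      ≤ ENNReal.ofReal (ε ^ p) * R + ENNReal.ofReal (B ^ p) * Q t :=
        hkey ε hε0 δ hδ0 hδ' t htmem
    _ ≤ η / 2 + η / 2 := add_le_add hεR htQ
    _ = η := ENNReal.add_halves η

/-- **Strong continuity on finitely supported continuous families**.  Let `1 ≤ p < ∞` and let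
`ρ` be a `p`-admissible weight on `L(G)` with constants `M ≥ 1`, `w ∈ ℝ`.  Then for every
family `g = (g_i)_{i ∈ I}` with each `g_i : [0,1] → ℝ` continuous and `g_i = 0` for all but
finitely many `i`, one has `lim_{t → 0⁺} ‖T_t g - g‖_{p,ρ} = 0`. -/
theorem tendsto_translation_of_continuous_finsupp {I : Type*} [Countable I] [Nonempty I]
    (P : I → Option I) (p : ℝ) (hp : 1 ≤ p) (ρ : I → ℝ → ℝ)
    (hint : ∀ i, IntegrableOn (ρ i) (Set.Icc (0 : ℝ) 1))
    (hpos : ∀ i, ∀ s ∈ Set.Icc (0 : ℝ) 1, 0 < ρ i s)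
    (M w : ℝ) (hM : 1 ≤ M) (hadm : Admissible P ρ p M w)
    (g : I → ℝ → ℝ) (hg : ∀ i, ContinuousOn (g i) (Set.Icc (0 : ℝ) 1))
    (hfin : {i | g i ≠ 0}.Finite) :
    Filter.Tendsto (fun t => pdist ρ p (Tleft P g t) g)
      (nhdsWithin 0 (Set.Ioi 0)) (nhds 0) := by
  classical
  have hp0 : (0 : ℝ) < p := lt_of_lt_of_le one_pos hp
  set S : Finset I :=
    hfin.toFinset ∪ hfin.toFinset.biUnion (fun j => (P j).toFinset) with hSdef
  set F : I → ℝ → ℝ≥0∞ := fun i t => ∫⁻ s in Set.Icc (0 : ℝ) 1,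
      ENNReal.ofReal (|Tleft P g t i s - g i s| ^ p * ρ i s) with hFdef
  -- components outside S vanish
  have hzero : ∀ t ∈ Set.Ioo (0 : ℝ) 1, ∀ i ∉ S, ∀ s ∈ Set.Icc (0 : ℝ) 1,
      Tleft P g t i s - g i s = 0 := by
    intro t ht i hiS s hs
    obtain ⟨hs0, hs1⟩ := hs
    have hgi : g i = 0 := by
      by_contra hgi
      exact hiS (Finset.mem_union_left _ (hfin.mem_toFinset.mpr hgi))
    have hji : ∀ j : Mset P (nfl t s) i, g (j : I) = 0 := by
      rintro ⟨j, hj⟩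
      have hst0 : (0 : ℝ) ≤ s + t := by linarith [ht.1.le]
      have hst2 : s + t < 2 := by linarith [ht.2]
      rcases lt_or_ge (s + t) 1 with hlt | hge
      · have hn : nfl t s = 0 := Nat.floor_eq_zero.mpr hlt
        rw [hn] at hj
        have : j = i := by simpa [Mset, pIter] using hj
        simpa [this] using hgi
      · have hn : nfl t s = 1 := by
          rw [nfl, Nat.floor_eq_iff hst0]
          exact ⟨by exact_mod_cast hge, by push_cast; linarith⟩
        rw [hn] at hj
        have hPj : P j = some i := by
          have : (P j).bind (pIter P 0) = some i := hj
          cases hPj : P j with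
          | none => rw [hPj] at this; simp at this
          | some k => rw [hPj] at this; simpa [pIter] using this
        by_contra hgj
        refine hiS (Finset.mem_union_right _ ?_)
        refine Finset.mem_biUnion.mpr ⟨j, hfin.mem_toFinset.mpr hgj, ?_⟩
        simp [hPj]
    have hTz : Tleft P g t i s = 0 := by
      unfold Tleft
      have hz : ∀ j : Mset P (nfl t s) i, g (j : I) (t + s - (nfl t s : ℝ)) = 0 := by
        intro j; simp [hji j]
      rw [tsum_congr hz]
      exact tsum_zero
    simp [hTz, hgi]
  have hFzero : ∀ t ∈ Set.Ioo (0 : ℝ) 1, ∀ i ∉ S, F i t = 0 := by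
    intro t ht i hiS
    have h0 : (∫⁻ s in Set.Icc (0 : ℝ) 1,
        ENNReal.ofReal (|Tleft P g t i s - g i s| ^ p * ρ i s)) =
        ∫⁻ _ in Set.Icc (0 : ℝ) 1, 0 := by
      refine lintegral_congr_ae ?_
      filter_upwards [ae_restrict_mem measurableSet_Icc] with s hs
      rw [hzero t ht i hiS s hs]
      simp [Real.zero_rpow (ne_of_gt hp0)]
    rw [hFdef]
    beta_reduce
    rw [h0, lintegral_zero]
  have hsum_eq : ∀ t ∈ Set.Ioo (0 : ℝ) 1,
      pnorm ρ p (fun i s => Tleft P g t i s - g i s) = ∑ i ∈ S, F i t := by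
    intro t ht
    exact tsum_eq_sum fun i hi => hFzero t ht i hi
  have htends : Filter.Tendsto (fun t => ∑ i ∈ S, F i t)
      (nhdsWithin 0 (Set.Ioi 0)) (nhds 0) := by
    have := tendsto_finset_sum (f := fun i t => F i t) (a := fun _ => (0 : ℝ≥0∞)) S
      (fun i _ => per_edge_tendsto P p hp ρ hint hpos g hg hfin i)
    simpa using this
  have hpn : Filter.Tendsto (fun t => pnorm ρ p (fun i s => Tleft P g t i s - g i s))
      (nhdsWithin 0 (Set.Ioi 0)) (nhds 0) := by
    refine htends.congr' ?_
    filter_upwards [Ioo_mem_nhdsGT_of_mem (Set.mem_Ico.mpr ⟨le_refl (0 : ℝ), one_pos⟩)]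
      with t ht
    exact (hsum_eq t ht).symm
  have hrpow : Filter.Tendsto (fun x : ℝ≥0∞ => x ^ (1 / p)) (nhds 0)
      (nhds ((0 : ℝ≥0∞) ^ (1 / p))) := ENNReal.continuous_rpow_const.tendsto 0
  have := hrpow.comp hpn
  rw [ENNReal.zero_rpow_of_pos (by positivity)] at this
  exact this

end
end

section
/- Let 1 ≤ p < ∞ and let ρ be a weight on a directed metric tree L(G) whose edge set I contains an edge i₀ with no child (i.e., there is no j ∈ I with P j = some i₀, so the head of e_{i₀} is a leaf of G). Then for every f ∈ L^p_ρ(L(G)) and every t > 1, (T_t f)_{i₀}(s) = 0 for all s ∈ [0,1]. Consequently, if the left translations {T_t}_{t≥0} form a C₀-semigroup on L^p_ρ(L(G)), this semigroup is not hypercyclic: no f ∈ L^p_ρ(L(G)) has dense orbit {T_t f : t ≥ 0}. -/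
open MeasureTheory ENNReal Filter

noncomputable section

variable {I : Type*}

/-- The translation semigroup `{T_t}_{t ≥ 0}` is hypercyclic on `L^p_ρ(L(G))`:
some `f` has dense orbit `{T_t f : t ≥ 0}`. -/
def Hypercyclic (P : I → Option I) (ρ : I → ℝ → ℝ) (p : ℝ) : Prop :=
  ∃ f, memLprho ρ p f ∧ ∀ g, memLprho ρ p g → ∀ ε > (0 : ℝ),
    ∃ t ≥ (0 : ℝ), pdist ρ p (Tleft P f t) g < ENNReal.ofReal ε

/-- The family of left translations `{T_t}_{t ≥ 0}` is a `C₀`-semigroup of bounded operators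
on `L^p_ρ(L(G))`: each `T_t` maps `L^p_ρ` boundedly into itself, `T_0 = Id`,
`T_{t+u} = T_t ∘ T_u`, and `t ↦ T_t f` is continuous on `[0,∞)` for every `f`
(identities and continuity taken in the `L^p_ρ`-(semi)metric). -/
def C0Semigroup (P : I → Option I) (ρ : I → ℝ → ℝ) (p : ℝ) : Prop :=
  (∀ t ≥ (0 : ℝ), ∀ f, memLprho ρ p f → memLprho ρ p (Tleft P f t)) ∧
  (∀ t ≥ (0 : ℝ), ∃ C : ℝ, 0 ≤ C ∧ ∀ f, memLprho ρ p f →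
      enorm' ρ p (Tleft P f t) ≤ ENNReal.ofReal C * enorm' ρ p f) ∧
  (∀ f, memLprho ρ p f → pdist ρ p (Tleft P f 0) f = 0) ∧
  (∀ t ≥ (0 : ℝ), ∀ u ≥ (0 : ℝ), ∀ f, memLprho ρ p f →
      pdist ρ p (Tleft P f (t + u)) (Tleft P (Tleft P f u) t) = 0) ∧
  (∀ f, memLprho ρ p f → ∀ t ≥ (0 : ℝ),
      Filter.Tendsto (fun u => pdist ρ p (Tleft P f u) (Tleft P f t))
        (nhdsWithin t (Set.Ici 0)) (nhds 0))

private lemma mset_succ_empty (P : I → Option I) (i₀ : I) (hleaf : ∀ j, P j ≠ some i₀) :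
    ∀ n, Mset P (n + 1) i₀ = ∅ := by
  intro n
  induction n with
  | zero =>
    ext j
    simp only [Mset, Set.mem_setOf_eq, Set.mem_empty_iff_false, iff_false]
    intro h
    cases hP : P j with
    | none => simp [pIter, hP] at h
    | some j' =>
      simp only [pIter, hP, Option.bind_some] at h
      exact hleaf j (by rw [hP]; simpa [pIter] using h)
  | succ m ih =>
    ext j
    simp only [Mset, Set.mem_setOf_eq, Set.mem_empty_iff_false, iff_false]
    intro h
    cases hP : P j with
    | none => simp [pIter, hP] at h
    | some j' =>
      have hmem : j' ∈ Mset P (m + 1) i₀ := by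
        simp only [Mset, Set.mem_setOf_eq]
        simpa [pIter, hP] using h
      rw [ih] at hmem
      exact hmem

private lemma tleft_zero (P : I → Option I) (i₀ : I) (hleaf : ∀ j, P j ≠ some i₀)
    (f : I → ℝ → ℝ) {t s : ℝ} (hs : 0 ≤ s) (h1 : 1 ≤ s + t) :
    Tleft P f t i₀ s = 0 := by
  have hn : 1 ≤ nfl t s := Nat.le_floor (by exact_mod_cast h1)
  obtain ⟨k, hk⟩ := Nat.exists_eq_add_of_le hn
  have hM : Mset P (nfl t s) i₀ = ∅ := by
    rw [hk, add_comm]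
    exact mset_succ_empty P i₀ hleaf k
  unfold Tleft
  rw [hM]
  exact tsum_empty

private lemma tleft_apply (P : I → Option I) (i₀ : I) (f : I → ℝ → ℝ) {t s : ℝ}
    (hs : 0 ≤ s) (ht : 0 ≤ t) (h1 : s + t < 1) :
    Tleft P f t i₀ s = f i₀ (t + s) := by
  have hn : nfl t s = 0 := Nat.floor_eq_zero.mpr h1
  have hM : Mset P 0 i₀ = ({i₀} : Set I) := by
    ext j
    simp [Mset, pIter]
  unfold Tleft
  rw [hn, hM, Nat.cast_zero]
  simpa using tsum_singleton i₀ (fun j => f j (t + s - 0))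

private lemma exists_eps {p : ℝ} (hp : 1 ≤ p) {m : ℝ≥0∞} (hm : 0 < m) :
    ∃ ε : ℝ, 0 < ε ∧ ENNReal.ofReal ε ^ p < m := by
  rcases eq_or_ne m ⊤ with rfl | hmt
  · exact ⟨1, one_pos, by simp⟩
  · have hmr : 0 < m.toReal := ENNReal.toReal_pos hm.ne' hmt
    refine ⟨min 1 (m.toReal / 2), lt_min one_pos (by positivity), ?_⟩
    set b := min 1 (m.toReal / 2) with hbdef
    have hb0 : 0 < b := lt_min one_pos (by positivity)
    rw [ENNReal.ofReal_rpow_of_pos hb0]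
    have h1 : b ^ p ≤ b := by
      calc b ^ p ≤ b ^ (1 : ℝ) :=
            Real.rpow_le_rpow_of_exponent_ge hb0 (min_le_left _ _) hp
        _ = b := Real.rpow_one b
    have h2 : b < m.toReal := lt_of_le_of_lt (min_le_right _ _) (by linarith)
    refine lt_of_le_of_lt (ENNReal.ofReal_le_ofReal h1) ?_
    rw [ENNReal.ofReal_lt_iff_lt_toReal hb0.le hmt]
    exact h2


/-- **No hypercyclicity in the presence of a leaf**.  Let `1 ≤ p < ∞` and let `ρ` be a
weight on `L(G)` whose edge set contains an edge `i₀` with no child (its head is a leaf).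
Then for every `f ∈ L^p_ρ(L(G))` and every `t > 1` one has `(T_t f)_{i₀}(s) = 0` for all
`s ∈ [0,1]`; consequently, if the left translations form a `C₀`-semigroup on `L^p_ρ(L(G))`,
this semigroup is not hypercyclic. -/
theorem not_hypercyclic_of_leaf {I : Type*} [Countable I] [Nonempty I]
    (P : I → Option I) (p : ℝ) (hp : 1 ≤ p)
    (ρ : I → ℝ → ℝ) (hρ : IsWeight ρ)
    (i₀ : I) (hleaf : ∀ j, P j ≠ some i₀) :
    (∀ f, memLprho ρ p f → ∀ t : ℝ, 1 < t → ∀ s ∈ Set.Icc (0 : ℝ) 1,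
      Tleft P f t i₀ s = 0) ∧
    (C0Semigroup P ρ p → ¬ Hypercyclic P ρ p) := by
  classical
  have hppos : (0 : ℝ) < p := lt_of_lt_of_le one_pos hp
  have hp0 : p ≠ 0 := hppos.ne'
  constructor
  · intro f hf t ht s hs
    exact tleft_zero P i₀ hleaf f hs.1 (by linarith [hs.1])
  · intro _ hyp
    obtain ⟨f, hf, hdense⟩ := hyp
    -- measurable representatives
    have hwae : AEMeasurable (ρ i₀) (volume.restrict (Set.Icc (0:ℝ) 1)) :=
      (hρ.integrable i₀).aemeasurable
    set W : ℝ → ℝ := fun x => max (hwae.mk (ρ i₀) x) 0 with hWdef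
    have hWmeas : Measurable W := hwae.measurable_mk.max measurable_const
    have hWnn : ∀ x, 0 ≤ W x := fun x => le_max_right _ _
    have hWeq : ∀ᵐ x ∂(volume.restrict (Set.Icc (0:ℝ) 1)), ρ i₀ x = W x := by
      filter_upwards [hwae.ae_eq_mk, hρ.pos i₀] with x h1 h2
      rw [hWdef]
      simp only
      rw [← h1]
      exact (max_eq_left h2.le).symm
    have hWpos : ∀ᵐ x ∂(volume.restrict (Set.Icc (0:ℝ) 1)), 0 < W x := by
      filter_upwards [hWeq, hρ.pos i₀] with x h1 h2
      rw [← h1]; exact h2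
    have hfae := hf.1 i₀
    set F : ℝ → ℝ := hfae.mk (f i₀) with hFdef
    have hFmeas : Measurable F := hfae.measurable_mk
    have hFeq : ∀ᵐ x ∂volume, x ∈ Set.Icc (0:ℝ) 1 → f i₀ x = F x :=
      (ae_restrict_iff' measurableSet_Icc).mp hfae.ae_eq_mk
    -- positivity of the half-mass of the weight
    have hsub : Set.Icc (2⁻¹:ℝ) 1 ⊆ Set.Icc 0 1 := Set.Icc_subset_Icc (by norm_num) le_rfl
    set c₀ : ℝ≥0∞ := ∫⁻ s in Set.Icc (2⁻¹:ℝ) 1, ENNReal.ofReal (ρ i₀ s) with hc₀def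
    have hc₀pos : 0 < c₀ := by
      have hcongr : c₀ = ∫⁻ s in Set.Icc (2⁻¹:ℝ) 1, ENNReal.ofReal (W s) :=
        lintegral_congr_ae ((ae_restrict_of_ae_restrict_of_subset hsub hWeq).mono
          fun x hx => by simp only [hx])
      rw [hcongr, pos_iff_ne_zero]
      intro h0
      rw [lintegral_eq_zero_iff hWmeas.ennreal_ofReal] at h0
      have hfalse : ∀ᵐ x ∂(volume.restrict (Set.Icc (2⁻¹:ℝ) 1)), False := by
        filter_upwards [h0, ae_restrict_of_ae_restrict_of_subset hsub hWpos] with x h1 h2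
        simp only [Pi.zero_apply] at h1
        exact absurd (ENNReal.ofReal_eq_zero.mp h1) (not_le.mpr h2)
      have hbot := ae_eq_bot.mp (Filter.eventually_false_iff_eq_bot.mp hfalse)
      have hzero := congrArg (fun μ : Measure ℝ => μ Set.univ) hbot
      simp only [Measure.restrict_apply_univ, Measure.coe_zero, Pi.zero_apply,
        Real.volume_Icc] at hzero
      rw [ENNReal.ofReal_eq_zero] at hzero
      norm_num at hzero
    -- small-weight sets
    set A : ℕ → Set ℝ := fun n => Set.Icc (0:ℝ) 1 ∩ W ⁻¹' Set.Iio ((n:ℝ)+1)⁻¹ with hAdef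
    have hAmeas : ∀ n, MeasurableSet (A n) :=
      fun n => measurableSet_Icc.inter (hWmeas measurableSet_Iio)
    have hAanti : Antitone A := by
      intro a b hab x hx
      have hx2 : W x < ((b:ℝ)+1)⁻¹ := hx.2
      refine ⟨hx.1, show W x < ((a:ℝ)+1)⁻¹ from lt_of_lt_of_le hx2 ?_⟩
      have hcast : (a:ℝ) + 1 ≤ (b:ℝ) + 1 := by
        have := (Nat.cast_le (α := ℝ)).mpr hab
        linarith
      exact (inv_le_inv₀ (by positivity) (by positivity)).mpr hcast
    have hWpos' : ∀ᵐ x ∂volume, x ∈ Set.Icc (0:ℝ) 1 → 0 < W x :=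
      (ae_restrict_iff' measurableSet_Icc).mp hWpos
    have hInull : volume (⋂ n, A n) = 0 := by
      refine measure_mono_null ?_ (ae_iff.mp hWpos')
      intro x hx
      simp only [Set.mem_iInter] at hx
      simp only [Set.mem_setOf_eq, Classical.not_imp, not_lt]
      refine ⟨(hx 0).1, ?_⟩
      by_contra hpos
      push_neg at hpos
      obtain ⟨n, hn⟩ := exists_nat_gt (W x)⁻¹
      have h1 : ((n:ℝ)+1)⁻¹ < W x := by
        rw [inv_lt_comm₀ (by positivity) hpos]
        linarith
      have h2 := (hx n).2
      simp only [Set.mem_preimage, Set.mem_Iio] at h2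
      linarith
    have htend : Filter.Tendsto (fun n => volume (A n)) atTop (nhds 0) := by
      have hfin : volume (A 0) ≠ ⊤ := by
        refine ne_of_lt (lt_of_le_of_lt (measure_mono Set.inter_subset_left) ?_)
        rw [Real.volume_Icc]
        exact ENNReal.ofReal_lt_top
      have := tendsto_measure_iInter_atTop (μ := volume)
        (fun n => (hAmeas n).nullMeasurableSet) hAanti ⟨0, hfin⟩
      rwa [hInull] at this
    have hev : ∀ᶠ n in atTop, volume (A n) < ENNReal.ofReal 16⁻¹ :=
      htend.eventually_lt_const (by simp)
    obtain ⟨n₀, hn₀⟩ := hev.exists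
    set δ : ℝ := ((n₀:ℝ)+1)⁻¹ with hδdef
    have hδpos : 0 < δ := by positivity
    -- the threshold m and ε
    have h2p : (0:ℝ) < 2 ^ p := Real.rpow_pos_of_pos two_pos p
    set m : ℝ≥0∞ := min c₀ (ENNReal.ofReal δ * ENNReal.ofReal 16⁻¹ / ENNReal.ofReal (2 ^ p))
      with hmdef
    have hmpos : 0 < m := by
      refine lt_min hc₀pos (ENNReal.div_pos ?_ ENNReal.ofReal_ne_top)
      exact mul_ne_zero (ENNReal.ofReal_pos.mpr hδpos).ne'
        (ENNReal.ofReal_pos.mpr (by norm_num)).ne' 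
    obtain ⟨ε, hεpos, hεm⟩ := exists_eps hp hmpos
    -- the comparison functions
    have hρtop : (∫⁻ s in Set.Icc (0:ℝ) 1, ENNReal.ofReal (ρ i₀ s)) < ⊤ :=
      (hρ.integrable i₀).lintegral_lt_top
    set g : ℝ → I → ℝ → ℝ := fun c i _ => if i = i₀ then c else 0 with hgdef
    have hgmem : ∀ c : ℝ, memLprho ρ p (g c) := by
      intro c
      refine ⟨fun i => aemeasurable_const, ?_⟩
      show pnorm ρ p (g c) < ⊤
      unfold pnorm
      rw [tsum_eq_single i₀ ?_]
      · calc (∫⁻ s in Set.Icc (0:ℝ) 1, ENNReal.ofReal (|g c i₀ s| ^ p * ρ i₀ s))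
            = ∫⁻ s in Set.Icc (0:ℝ) 1, ENNReal.ofReal (|c| ^ p) * ENNReal.ofReal (ρ i₀ s) := by
              refine lintegral_congr fun s => ?_
              rw [hgdef]
              simp only [reduceIte]
              rw [← ENNReal.ofReal_mul (by positivity)]
          _ = ENNReal.ofReal (|c| ^ p) * ∫⁻ s in Set.Icc (0:ℝ) 1, ENNReal.ofReal (ρ i₀ s) :=
              lintegral_const_mul' _ _ ENNReal.ofReal_ne_top
          _ < ⊤ := ENNReal.mul_lt_top ENNReal.ofReal_lt_top hρtop
      · intro i hi
        have : ∀ s : ℝ, |g c i s| ^ p * ρ i s = 0 := by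
          intro s
          rw [hgdef]
          simp only [if_neg hi, abs_zero, Real.zero_rpow hp0, zero_mul]
        simp only [this, ENNReal.ofReal_zero, lintegral_zero]
    -- from density: small distances
    have key : ∀ c : ℝ, ∃ t : ℝ, 0 ≤ t ∧
        (∫⁻ s in Set.Icc (0:ℝ) 1,
          ENNReal.ofReal (|Tleft P f t i₀ s - c| ^ p * ρ i₀ s)) < m := by
      intro c
      obtain ⟨t, ht0, htd⟩ := hdense (g c) (hgmem c) ε hεpos
      refine ⟨t, ht0, ?_⟩
      have h1 : pnorm ρ p (fun i s => Tleft P f t i s - g c i s) < ENNReal.ofReal ε ^ p := by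
        have h2 := ENNReal.rpow_lt_rpow htd hppos
        rwa [pdist, enorm', ← ENNReal.rpow_mul, one_div, inv_mul_cancel₀ hp0,
          ENNReal.rpow_one] at h2
      have h2 : (∫⁻ s in Set.Icc (0:ℝ) 1,
          ENNReal.ofReal (|Tleft P f t i₀ s - c| ^ p * ρ i₀ s))
          ≤ pnorm ρ p (fun i s => Tleft P f t i s - g c i s) := by
        unfold pnorm
        refine le_trans (le_of_eq ?_) (ENNReal.le_tsum i₀)
        refine lintegral_congr fun s => ?_
        rw [hgdef]
        simp only [reduceIte]
      exact lt_of_le_of_lt h2 (lt_trans h1 hεm)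
    obtain ⟨t₁, ht₁0, hE₁⟩ := key 1
    obtain ⟨t₂, ht₂0, hE₂⟩ := key 2
    -- translation times are less than 1/2
    have thalf : ∀ c : ℝ, 1 ≤ c → ∀ t : ℝ, 0 ≤ t →
        (∫⁻ s in Set.Icc (0:ℝ) 1,
          ENNReal.ofReal (|Tleft P f t i₀ s - c| ^ p * ρ i₀ s)) < m →
        t < 2⁻¹ := by
      intro c hc t ht0 hE
      by_contra hge
      push_neg at hge
      have hlow : c₀ ≤ ∫⁻ s in Set.Icc (0:ℝ) 1,
          ENNReal.ofReal (|Tleft P f t i₀ s - c| ^ p * ρ i₀ s) := by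
        refine le_trans ?_ (lintegral_mono_set hsub)
        rw [hc₀def]
        refine lintegral_mono_ae ?_
        filter_upwards [ae_restrict_mem measurableSet_Icc] with s hs
        have hz : Tleft P f t i₀ s = 0 :=
          tleft_zero P i₀ hleaf f (by linarith [hs.1]) (by linarith [hs.1])
        rw [hz]
        rcases le_or_gt (ρ i₀ s) 0 with hneg | hpos
        · rw [ENNReal.ofReal_of_nonpos hneg]
          exact zero_le
        · apply ENNReal.ofReal_le_ofReal
          rw [zero_sub, abs_neg, abs_of_pos (by linarith : (0:ℝ) < c)]
          have h1c : (1:ℝ) ≤ c ^ p := by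
            calc (1:ℝ) = 1 ^ p := (Real.one_rpow p).symm
              _ ≤ c ^ p := Real.rpow_le_rpow zero_le_one hc hppos.le
          nlinarith
      exact absurd hE (not_lt.mpr (le_trans (min_le_left _ _) hlow))
    have ht₁ : t₁ < 2⁻¹ := thalf 1 le_rfl t₁ ht₁0 hE₁
    have ht₂ : t₂ < 2⁻¹ := thalf 2 (by norm_num) t₂ ht₂0 hE₂
    -- change of variables: the K bound
    have hK : ∀ c : ℝ, ∀ t : ℝ, 0 ≤ t → t < 2⁻¹ →
        (∫⁻ s in Set.Icc (0:ℝ) 1,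
          ENNReal.ofReal (|Tleft P f t i₀ s - c| ^ p * ρ i₀ s)) < m →
        (∫⁻ r in Set.Ico (2⁻¹:ℝ) 1, ENNReal.ofReal (|F r - c| ^ p * W (r - t))) < m := by
      intro c t ht0 ht2 hE
      refine lt_of_le_of_lt ?_ hE
      have hmp := measurePreserving_add_right (volume : Measure ℝ) t
      have hemb : MeasurableEmbedding (fun x : ℝ => x + t) :=
        (Homeomorph.addRight t).measurableEmbedding
      have step1 : (∫⁻ r in Set.Ico (2⁻¹:ℝ) 1, ENNReal.ofReal (|F r - c| ^ p * W (r - t)))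
          ≤ ∫⁻ r in Set.Ico t 1, ENNReal.ofReal (|F r - c| ^ p * W (r - t)) :=
        lintegral_mono_set (Set.Ico_subset_Ico ht2.le le_rfl)
      have step2 : (∫⁻ r in Set.Ico t 1, ENNReal.ofReal (|F r - c| ^ p * W (r - t)))
          = ∫⁻ s in Set.Ico (0:ℝ) (1 - t), ENNReal.ofReal (|F (s + t) - c| ^ p * W s) := by
        rw [← lintegral_indicator measurableSet_Ico, ← lintegral_indicator measurableSet_Ico,
          ← hmp.lintegral_comp_emb hemb
            ((Set.Ico t 1).indicator fun r => ENNReal.ofReal (|F r - c| ^ p * W (r - t)))]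
        refine lintegral_congr fun s => ?_
        by_cases hs : s ∈ Set.Ico (0:ℝ) (1 - t)
        · rw [Set.indicator_of_mem (show s + t ∈ Set.Ico t 1 by
            exact ⟨by linarith [hs.1], by linarith [hs.2]⟩),
            Set.indicator_of_mem hs]
          simp [add_sub_cancel_right]
        · rw [Set.indicator_of_notMem (show s + t ∉ Set.Ico t 1 by
            intro hmem; exact hs ⟨by linarith [hmem.1], by linarith [hmem.2]⟩),
            Set.indicator_of_notMem hs]
      have step3 : (∫⁻ s in Set.Ico (0:ℝ) (1 - t),
            ENNReal.ofReal (|F (s + t) - c| ^ p * W s))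
          = ∫⁻ s in Set.Ico (0:ℝ) (1 - t),
            ENNReal.ofReal (|Tleft P f t i₀ s - c| ^ p * ρ i₀ s) := by
        refine lintegral_congr_ae ?_
        have hsub2 : Set.Ico (0:ℝ) (1 - t) ⊆ Set.Icc 0 1 :=
          fun x hx => ⟨hx.1, by linarith [hx.2]⟩
        have hWsub := ae_restrict_of_ae_restrict_of_subset hsub2 hWeq
        have htrans : ∀ᵐ s ∂(volume : Measure ℝ),
            (s + t ∈ Set.Icc (0:ℝ) 1 → f i₀ (s + t) = F (s + t)) := by
          rw [ae_iff]
          have hpre : {s : ℝ | ¬(s + t ∈ Set.Icc (0:ℝ) 1 → f i₀ (s + t) = F (s + t))}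
              = (fun x : ℝ => x + t) ⁻¹'
                {x : ℝ | ¬(x ∈ Set.Icc (0:ℝ) 1 → f i₀ x = F x)} := rfl
          rw [hpre, hmp.measure_preimage_emb hemb]
          exact ae_iff.mp hFeq
        filter_upwards [hWsub, ae_restrict_of_ae htrans, ae_restrict_mem measurableSet_Ico]
          with s hW1 hF1 hs1
        have hmem : s + t ∈ Set.Icc (0:ℝ) 1 := ⟨by linarith [hs1.1], by linarith [hs1.2]⟩
        have hsf : Tleft P f t i₀ s = f i₀ (t + s) :=
          tleft_apply P i₀ f hs1.1 ht0 (by linarith [hs1.2])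
        rw [hsf, add_comm t s, hF1 hmem, hW1]
      have step4 : (∫⁻ s in Set.Ico (0:ℝ) (1 - t),
            ENNReal.ofReal (|Tleft P f t i₀ s - c| ^ p * ρ i₀ s))
          ≤ ∫⁻ s in Set.Icc (0:ℝ) 1,
            ENNReal.ofReal (|Tleft P f t i₀ s - c| ^ p * ρ i₀ s) :=
        lintegral_mono_set (fun x hx => ⟨hx.1, by linarith [hx.2]⟩)
      calc (∫⁻ r in Set.Ico (2⁻¹:ℝ) 1, ENNReal.ofReal (|F r - c| ^ p * W (r - t)))
          ≤ ∫⁻ r in Set.Ico t 1, ENNReal.ofReal (|F r - c| ^ p * W (r - t)) := step1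
        _ = ∫⁻ s in Set.Ico (0:ℝ) (1 - t), ENNReal.ofReal (|F (s + t) - c| ^ p * W s) := step2
        _ = ∫⁻ s in Set.Ico (0:ℝ) (1 - t),
              ENNReal.ofReal (|Tleft P f t i₀ s - c| ^ p * ρ i₀ s) := step3
        _ ≤ _ := step4
    -- the bad sets
    set B : ℝ → Set ℝ := fun c => Set.Ico (2⁻¹:ℝ) 1 ∩ {r | 2⁻¹ ≤ |F r - c|} with hBdef
    have hBmeas : ∀ c, MeasurableSet (B c) := fun c =>
      measurableSet_Ico.inter
        (measurableSet_le measurable_const (hFmeas.sub measurable_const).abs)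
    have hBvol : ∀ c : ℝ, ∀ t : ℝ, 0 ≤ t → t < 2⁻¹ →
        (∫⁻ r in Set.Ico (2⁻¹:ℝ) 1, ENNReal.ofReal (|F r - c| ^ p * W (r - t))) < m →
        volume (B c) ≤ ENNReal.ofReal 16⁻¹ + ENNReal.ofReal 16⁻¹ := by
      intro c t ht0 ht2 hKlt
      have hint : (∫⁻ r in B c, ENNReal.ofReal (W (r - t)))
          ≤ ENNReal.ofReal δ * ENNReal.ofReal 16⁻¹ := by
        have hb1 : (∫⁻ r in B c, ENNReal.ofReal (W (r - t)))
            ≤ ∫⁻ r in B c,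
              ENNReal.ofReal (2 ^ p) * ENNReal.ofReal (|F r - c| ^ p * W (r - t)) := by
          refine lintegral_mono_ae ?_
          filter_upwards [ae_restrict_mem (hBmeas c)] with r hr
          rw [← ENNReal.ofReal_mul (by positivity)]
          apply ENNReal.ofReal_le_ofReal
          have h1 : (2⁻¹:ℝ) ^ p ≤ |F r - c| ^ p :=
            Real.rpow_le_rpow (by norm_num) hr.2 hppos.le
          have h2 : (2:ℝ) ^ p * (2⁻¹:ℝ) ^ p = 1 := by
            rw [← Real.mul_rpow (by norm_num) (by norm_num)]
            norm_num
          calc W (r - t) = (2:ℝ) ^ p * (2⁻¹:ℝ) ^ p * W (r - t) := by rw [h2, one_mul]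
            _ ≤ (2:ℝ) ^ p * (|F r - c| ^ p * W (r - t)) := by
                rw [mul_assoc]
                exact mul_le_mul_of_nonneg_left
                  (mul_le_mul_of_nonneg_right h1 (hWnn _)) h2p.le
        have hb2 : (∫⁻ r in B c,
              ENNReal.ofReal (2 ^ p) * ENNReal.ofReal (|F r - c| ^ p * W (r - t)))
            = ENNReal.ofReal (2 ^ p)
              * ∫⁻ r in B c, ENNReal.ofReal (|F r - c| ^ p * W (r - t)) :=
          lintegral_const_mul' _ _ ENNReal.ofReal_ne_top
        have hb3 : (∫⁻ r in B c, ENNReal.ofReal (|F r - c| ^ p * W (r - t)))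
            ≤ ∫⁻ r in Set.Ico (2⁻¹:ℝ) 1, ENNReal.ofReal (|F r - c| ^ p * W (r - t)) :=
          lintegral_mono_set Set.inter_subset_left
        have hmle : m ≤ ENNReal.ofReal δ * ENNReal.ofReal 16⁻¹ / ENNReal.ofReal (2 ^ p) :=
          min_le_right _ _
        calc (∫⁻ r in B c, ENNReal.ofReal (W (r - t)))
            ≤ ENNReal.ofReal (2 ^ p)
              * ∫⁻ r in B c, ENNReal.ofReal (|F r - c| ^ p * W (r - t)) := hb1.trans hb2.le
          _ ≤ ENNReal.ofReal (2 ^ p)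
              * (ENNReal.ofReal δ * ENNReal.ofReal 16⁻¹ / ENNReal.ofReal (2 ^ p)) :=
              mul_le_mul_right ((hb3.trans hKlt.le).trans hmle) _
          _ = ENNReal.ofReal δ * ENNReal.ofReal 16⁻¹ :=
              ENNReal.mul_div_cancel (ENNReal.ofReal_pos.mpr h2p).ne' ENNReal.ofReal_ne_top
      set S : Set ℝ := {r | δ ≤ W (r - t)} with hSdef
      have hSmeas : MeasurableSet S :=
        measurableSet_le measurable_const (hWmeas.comp (measurable_id.sub measurable_const))
      have hcheb : volume (B c ∩ S) ≤ ENNReal.ofReal 16⁻¹ := by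
        have h1 : ENNReal.ofReal δ * volume (B c ∩ S)
            ≤ ENNReal.ofReal δ * ENNReal.ofReal 16⁻¹ := by
          calc ENNReal.ofReal δ * volume (B c ∩ S)
              = ∫⁻ _ in B c ∩ S, ENNReal.ofReal δ := (setLIntegral_const _ _).symm
            _ ≤ ∫⁻ r in B c ∩ S, ENNReal.ofReal (W (r - t)) := by
                refine lintegral_mono_ae ?_
                filter_upwards [ae_restrict_mem ((hBmeas c).inter hSmeas)] with r hr
                exact ENNReal.ofReal_le_ofReal hr.2
            _ ≤ ∫⁻ r in B c, ENNReal.ofReal (W (r - t)) :=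
                lintegral_mono_set Set.inter_subset_left
            _ ≤ ENNReal.ofReal δ * ENNReal.ofReal 16⁻¹ := hint
        exact (ENNReal.mul_le_mul_iff_right
          (by simp only [ne_eq, ENNReal.ofReal_eq_zero, not_le]; linarith)
          ENNReal.ofReal_ne_top).mp h1
      have hdiff : volume (B c \ S) ≤ ENNReal.ofReal 16⁻¹ := by
        have hsub3 : B c \ S ⊆ (fun r : ℝ => r + (-t)) ⁻¹' A n₀ := by
          rintro r ⟨⟨hr1, hr2⟩, hrS⟩
          simp only [Set.mem_preimage, hAdef, Set.mem_inter_iff, Set.mem_Icc,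
            Set.mem_preimage, Set.mem_Iio]
          have hrS' : W (r - t) < δ := by
            by_contra hge
            exact hrS (not_lt.mp hge)
          rw [← sub_eq_add_neg]
          exact ⟨⟨by linarith [hr1.1], by linarith [hr1.2]⟩, hrS'⟩
        calc volume (B c \ S) ≤ volume ((fun r : ℝ => r + (-t)) ⁻¹' A n₀) :=
              measure_mono hsub3
          _ = volume (A n₀) :=
              (measurePreserving_add_right volume (-t)).measure_preimage_emb
                ((Homeomorph.addRight (-t)).measurableEmbedding) _
          _ ≤ ENNReal.ofReal 16⁻¹ := hn₀.le
      calc volume (B c) ≤ volume (B c ∩ S) + volume (B c \ S) :=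
            measure_le_inter_add_diff _ _ _
        _ ≤ ENNReal.ofReal 16⁻¹ + ENNReal.ofReal 16⁻¹ := add_le_add hcheb hdiff
    -- the covering and final contradiction
    have hcover : Set.Ico (2⁻¹:ℝ) 1 ⊆ B 1 ∪ B 2 := by
      intro r hr
      by_contra hno
      obtain ⟨h1, h2⟩ := not_or.mp hno
      have h1' : |F r - 1| < 2⁻¹ := by
        by_contra hge
        exact h1 ⟨hr, not_lt.mp hge⟩
      have h2' : |F r - 2| < 2⁻¹ := by
        by_contra hge
        exact h2 ⟨hr, not_lt.mp hge⟩
      rw [abs_lt] at h1' h2'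
      obtain ⟨h1a, h1b⟩ := h1'
      obtain ⟨h2a, h2b⟩ := h2'
      linarith
    have hv1 := hBvol 1 t₁ ht₁0 ht₁ (hK 1 t₁ ht₁0 ht₁ hE₁)
    have hv2 := hBvol 2 t₂ ht₂0 ht₂ (hK 2 t₂ ht₂0 ht₂ hE₂)
    have hfinal : volume (Set.Ico (2⁻¹:ℝ) 1) ≤ volume (B 1) + volume (B 2) :=
      le_trans (measure_mono hcover) (measure_union_le _ _)
    rw [Real.volume_Ico] at hfinal
    have e1 : ENNReal.ofReal (16⁻¹:ℝ) + ENNReal.ofReal (16⁻¹:ℝ)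
        = ENNReal.ofReal ((16⁻¹:ℝ) + 16⁻¹) :=
      (ENNReal.ofReal_add (by norm_num) (by norm_num)).symm
    have e2 : ENNReal.ofReal ((16⁻¹:ℝ) + 16⁻¹) + ENNReal.ofReal ((16⁻¹:ℝ) + 16⁻¹)
        = ENNReal.ofReal (((16⁻¹:ℝ) + 16⁻¹) + (16⁻¹ + 16⁻¹)) :=
      (ENNReal.ofReal_add (by norm_num) (by norm_num)).symm
    have hle : ENNReal.ofReal ((1:ℝ) - 2⁻¹)
        ≤ ENNReal.ofReal (((16⁻¹:ℝ) + 16⁻¹) + (16⁻¹ + 16⁻¹)) := by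
      calc ENNReal.ofReal ((1:ℝ) - 2⁻¹) ≤ volume (B 1) + volume (B 2) := hfinal
        _ ≤ (ENNReal.ofReal 16⁻¹ + ENNReal.ofReal 16⁻¹)
            + (ENNReal.ofReal 16⁻¹ + ENNReal.ofReal 16⁻¹) := add_le_add hv1 hv2
        _ = _ := by rw [e1, e2]
    have hcontra := (ENNReal.ofReal_le_ofReal_iff (by norm_num)).mp hle
    norm_num at hcontra

end
end
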